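/- arXiv:2409.13472 — 3 statements merged into one kernel-verified Lean document; each statement's English description precedes it below -/
import Mathlib

section
/- (Matrix Tree Theorem) For a finite undirected graph G with edge weights w : E → ℝ_{≥0} and any fixed vertex r, the sum over all spanning trees T of G of ∏_{e ∈ T} w(e) equals det(L_G^{[r]}), where L_G = D - A is the weighted Laplacian and L_G^{[r]} is L_G with the row and column indexed by r deleted. -/
open Finset Classical Polynomial

noncomputable section

variable {V : Type*} [Fintype V] [DecidableEq V]

/-- Product of the edge weights of a graph (used as the weight of a spanning tree). -/
def tw (w : Sym2 V → ℝ) (H : SimpleGraph V) : ℝ := ∏ e ∈ H.edgeSet.toFinset, w e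

/-- The spanning trees of `G`: subgraphs of `G` on all of `V` that are trees. -/
def spanningTrees (G : SimpleGraph V) : Finset (SimpleGraph V) :=
  Finset.univ.filter (fun H => H ≤ G ∧ H.IsTree)

/-- Total weight of all spanning trees (the normalization constant). -/
def Z (G : SimpleGraph V) (w : Sym2 V → ℝ) : ℝ := ∑ H ∈ spanningTrees G, tw w H

/-- Expectation of `f` over a random spanning tree sampled with probability
proportional to the product of its edge weights. -/
def Ex (G : SimpleGraph V) (w : Sym2 V → ℝ) (f : SimpleGraph V → ℝ) : ℝ :=
  ∑ H ∈ spanningTrees G, (tw w H / Z G w) * f H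

/-- Variance of `f` over a random spanning tree. -/
def Var (G : SimpleGraph V) (w : Sym2 V → ℝ) (f : SimpleGraph V → ℝ) : ℝ :=
  Ex G w (fun H => f H ^ 2) - (Ex G w f) ^ 2

/-- ω-weighted degree of `v` in `H` (real degree weights). -/
def degw (ω : Sym2 V → ℝ) (v : V) (H : SimpleGraph V) : ℝ :=
  ∑ e ∈ H.edgeSet.toFinset.filter (fun e => v ∈ e), ω e

/-- ω-weighted degree of `v` in `H` (natural-number degree weights). -/
def degn (ω : Sym2 V → ℕ) (v : V) (H : SimpleGraph V) : ℕ :=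
  ∑ e ∈ H.edgeSet.toFinset.filter (fun e => v ∈ e), ω e

/-- The degree polynomial `P_v(x) = Σ_k (-1)^k w(S_k) x^k`, written as a sum over
spanning trees (grouping the trees by the weighted degree `k` of `v`). -/
def degPoly (G : SimpleGraph V) (w : Sym2 V → ℝ) (ω : Sym2 V → ℕ) (v : V) : Polynomial ℝ :=
  ∑ H ∈ spanningTrees G,
    Polynomial.C ((-1) ^ (degn ω v H) * tw w H) * Polynomial.X ^ (degn ω v H)

/-- Weighted Laplacian `L = D - A` of a simple graph with edge weights `w`. -/
def lap (G : SimpleGraph V) (w : Sym2 V → ℝ) : Matrix V V ℝ :=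
  fun u x => if u = x then ∑ y ∈ Finset.univ.filter (G.Adj u ·), w s(u, y)
    else if G.Adj u x then -w s(u, x) else 0

/-- Delete the row and column indexed by `r`. -/
def del (r : V) (M : Matrix V V ℝ) : Matrix {x : V // x ≠ r} {x : V // x ≠ r} ℝ :=
  M.submatrix Subtype.val Subtype.val

/-- The subgraph of `G` containing only the edges incident to `v`. -/
def inc (G : SimpleGraph V) (v : V) : SimpleGraph V :=
  SimpleGraph.fromRel (fun a b => G.Adj a b ∧ (a = v ∨ b = v))


section MTTgeneral
open Matrix
variable {m κ R : Type*} [Fintype m] [DecidableEq m] [Fintype κ] [DecidableEq κ] [CommRing R]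

theorem det_mul_expand (A : Matrix m κ R) (B : Matrix κ m R) :
    (A * B).det = ∑ g ∈ (univ : Finset (m → κ)).filter Function.Injective,
      (∏ i, A i (g i)) * (B.submatrix g id).det := by
  have h1 : (A * B).det
      = Matrix.detRowAlternating (fun i => ∑ j : κ, A i j • B j) := by
    congr 1
    ext i k
    simp [Matrix.mul_apply]
  rw [h1]
  rw [← AlternatingMap.coe_multilinearMap]
  rw [show (fun i => ∑ j : κ, A i j • B j) = (fun i => ∑ j : κ, (fun i j => A i j • B j) i j) from rfl]
  rw [(Matrix.detRowAlternating (R := R) (n := m)).toMultilinearMap.map_sum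
    (g := fun i j => A i j • B j)]
  have hsm : ∀ g : m → κ,
      ((Matrix.detRowAlternating (R := R) (n := m)).toMultilinearMap
        (fun i => A i (g i) • B (g i)) : R)
      = (∏ i, A i (g i)) * (B.submatrix g id).det := by
    intro g
    rw [show (fun i => A i (g i) • B (g i))
        = (fun i => (fun i => A i (g i)) i • (fun i => B (g i)) i) from rfl]
    rw [MultilinearMap.map_smul_univ]
    rfl
  simp only [hsm]
  rw [← Finset.sum_filter_add_sum_filter_not univ Function.Injective]
  have h2 : ∀ g ∈ (univ : Finset (m → κ)).filter (fun g => ¬ Function.Injective g),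
      (∏ i, A i (g i)) * (B.submatrix g id).det = 0 := by
    intro g hg
    rw [Finset.mem_filter] at hg
    obtain ⟨i, j, hij, hne⟩ : ∃ i j, g i = g j ∧ i ≠ j := by
      simpa [Function.Injective] using hg.2
    have : (B.submatrix g id).det = 0 :=
      Matrix.det_zero_of_row_eq hne (by ext k; simp [hij])
    rw [this, mul_zero]
  rw [Finset.sum_eq_zero h2, add_zero]

theorem fiber_sum (A : Matrix m κ R) (B : Matrix κ m R) (S : Finset κ) (g0 : m → κ)
    (hg0 : Function.Injective g0) (him : Finset.image g0 univ = S) :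
    ∑ g ∈ ((univ : Finset (m → κ)).filter Function.Injective).filter
        (fun g => Finset.image g univ = S),
      (∏ i, A i (g i)) * (B.submatrix g id).det
      = (A.submatrix id g0).det * (B.submatrix g0 id).det := by
  -- reindex the fiber by permutations
  have key : ∀ g ∈ ((univ : Finset (m → κ)).filter Function.Injective).filter
      (fun g => Finset.image g univ = S), ∃ σ : Equiv.Perm m, g = g0 ∘ σ := by
    intro g hg
    simp only [Finset.mem_filter, Finset.mem_univ, true_and] at hg
    have hrange : ∀ i, g i ∈ Finset.image g0 univ := by
      intro i; rw [him, ← hg.2]; exact Finset.mem_image_of_mem g (Finset.mem_univ i)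
    choose σ hσmem hσ using fun i => Finset.mem_image.mp (hrange i)
    have hinj : Function.Injective σ := by
      intro a b hab
      exact hg.1 (by rw [← hσ a, ← hσ b, hab])
    exact ⟨Equiv.ofBijective σ (Finite.injective_iff_bijective.mp hinj),
      funext fun i => (hσ i).symm⟩
  rw [show ((univ : Finset (m → κ)).filter Function.Injective).filter
      (fun g => Finset.image g univ = S)
      = Finset.image (fun σ : Equiv.Perm m => g0 ∘ σ) univ from ?_]
  · rw [Finset.sum_image (by
      intro a _ b _ hab
      ext i
      exact hg0 (congrFun hab i))]
    have hperm : ∀ σ : Equiv.Perm m,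
        (B.submatrix (g0 ∘ σ) id).det = Equiv.Perm.sign σ * (B.submatrix g0 id).det := by
      intro σ
      rw [show B.submatrix (g0 ∘ σ) id = (B.submatrix g0 id).submatrix σ id from rfl]
      rw [Matrix.det_permute]
    simp only [hperm]
    rw [Matrix.det_apply' (A.submatrix id g0), Finset.sum_mul]
    refine ((Equiv.sum_comp (Equiv.inv (Equiv.Perm m)) _).symm.trans
      (Finset.sum_congr rfl fun σ _ => ?_))
    have hprod : ∏ i, A i (g0 ((Equiv.inv (Equiv.Perm m) σ) i)) = ∏ i, A (σ i) (g0 i) := by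
      rw [← Equiv.prod_comp σ (fun i => A i (g0 ((Equiv.inv (Equiv.Perm m) σ) i)))]
      simp
    simp only [Function.comp, Equiv.inv_apply] at *
    rw [show ∏ i, A i (g0 (σ⁻¹ i)) = ∏ i, A (σ i) (g0 i) from hprod]
    simp only [Matrix.submatrix_apply, id_eq, Equiv.Perm.sign_inv]
    push_cast
    ring
  · ext g
    simp only [Finset.mem_image, Finset.mem_univ, true_and]
    constructor
    · intro hg
      obtain ⟨σ, hσ⟩ := key g hg
      exact ⟨σ, hσ.symm⟩
    · rintro ⟨σ, rfl⟩
      simp only [Finset.mem_filter, Finset.mem_univ, true_and]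
      constructor
      · exact hg0.comp σ.injective
      · rw [← him]
        ext e
        simp only [Finset.mem_image, Finset.mem_univ, true_and, Function.comp]
        exact ⟨fun ⟨i, h⟩ => ⟨σ i, h⟩, fun ⟨i, h⟩ => ⟨σ.symm i, by simpa using h⟩⟩


end MTTgeneral

namespace MTTaux

open Matrix

variable {V : Type*} [Fintype V] [DecidableEq V]

def ord (v : V) : ℕ := (Fintype.equivFin V v : ℕ)

lemma ord_inj : Function.Injective (ord (V := V)) :=
  fun a b h => (Fintype.equivFin V).injective (Fin.ext h)

def sgn (a b : V) : ℝ := if ord a < ord b then 1 else -1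

lemma sgn_swap {a b : V} (h : a ≠ b) : sgn b a = - sgn a b := by
  have hne : ord a ≠ ord b := fun hc => h (ord_inj hc)
  rcases hne.lt_or_gt with h' | h' <;>
    simp [sgn, h', not_lt_of_gt, le_of_lt, not_lt.mpr (le_of_lt h')]

lemma sgn_sq (a b : V) : sgn a b * sgn a b = 1 := by
  unfold sgn; split <;> norm_num

def incB (v : V) : Sym2 V → ℝ :=
  Sym2.lift ⟨fun a b => (if v = a then sgn a b else 0) + (if v = b then sgn b a else 0),
    fun a b => add_comm _ _⟩

lemma incB_mk (v a b : V) :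
    incB v s(a, b) = (if v = a then sgn a b else 0) + (if v = b then sgn b a else 0) := rfl

lemma incB_eq {a b : V} (h : a ≠ b) (v : V) :
    incB v s(a, b) = sgn a b * ((if v = a then (1:ℝ) else 0) - (if v = b then 1 else 0)) := by
  rw [incB_mk]
  by_cases hva : v = a
  · subst hva
    simp [h]
  · by_cases hvb : v = b
    · subst hvb
      simp [hva, sgn_swap h]
    · simp [hva, hvb]

lemma incB_not_mem {v : V} {e : Sym2 V} (h : v ∉ e) : incB v e = 0 := by
  induction e using Sym2.ind with
  | _ a b =>
    simp only [Sym2.mem_iff, not_or] at h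
    simp [incB_mk, h.1, h.2]

lemma lap_factor (G : SimpleGraph V) (w : Sym2 V → ℝ) (u x : V) :
    lap G w u x = ∑ e ∈ G.edgeSet.toFinset, w e * (incB u e * incB x e) := by
  by_cases h : u = x
  · subst h
    have hterm : ∀ e ∈ G.edgeSet.toFinset,
        w e * (incB u e * incB u e) = if u ∈ e then w e else 0 := by
      intro e he
      rw [Set.mem_toFinset] at he
      induction e using Sym2.ind with
      | _ a b =>
        have hab : a ≠ b := G.ne_of_adj he
        have h2 : incB u s(a, b) * incB u s(a, b) = if u ∈ s(a, b) then 1 else 0 := by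
          rw [incB_mk]
          by_cases hua : u = a
          · subst hua
            have hub : u ≠ b := hab
            simp [hub, sgn_sq]
          · by_cases hub : u = b
            · subst hub
              simp [hua, sgn_sq]
            · simp [hua, hub]
        rw [h2]
        split <;> simp
    rw [Finset.sum_congr rfl hterm, ← Finset.sum_filter]
    rw [show lap G w u u = ∑ y ∈ Finset.univ.filter (G.Adj u ·), w s(u, y) from by simp [lap]]
    refine Finset.sum_nbij' (i := fun y => s(u, y))
      (j := fun e => if he : u ∈ e then Sym2.Mem.other' he else u) ?_ ?_ ?_ ?_ ?_
    · intro y hy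
      simp only [Finset.mem_filter, Finset.mem_univ, true_and] at hy ⊢
      simp [Set.mem_toFinset, hy]
    · intro e he
      simp only [Finset.mem_filter, Set.mem_toFinset] at he
      simp only [Finset.mem_filter, Finset.mem_univ, true_and]
      rw [dif_pos he.2]
      have hspec := Sym2.other_spec' he.2
      rw [← SimpleGraph.mem_edgeSet, hspec]
      exact he.1
    · intro y hy
      rw [dif_pos (Sym2.mem_mk_left u y)]
      exact Sym2.congr_right.mp (Sym2.other_spec' (Sym2.mem_mk_left u y))
    · intro e he
      simp only [Finset.mem_filter, Set.mem_toFinset] at he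
      rw [dif_pos he.2]
      exact Sym2.other_spec' he.2
    · intro y hy
      rfl
  · have hterm : ∀ e ∈ G.edgeSet.toFinset,
        w e * (incB u e * incB x e) = if e = s(u, x) then -w e else 0 := by
      intro e he
      rw [Set.mem_toFinset] at he
      by_cases hue : u ∈ e
      · by_cases hxe : x ∈ e
        · have hexu : e = s(u, x) := (Sym2.mem_and_mem_iff h).mp ⟨hue, hxe⟩
          subst hexu
          rw [if_pos rfl, incB_mk, incB_mk]
          rw [if_pos rfl, if_neg h, if_neg (fun hc : x = u => h hc.symm), if_pos rfl]
          rw [sgn_swap h]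
          ring_nf
          rw [sq, sgn_sq]
          ring
        · rw [incB_not_mem hxe]
          rw [if_neg (fun hc : e = s(u, x) => hxe (hc ▸ Sym2.mem_mk_right u x))]
          ring
      · rw [incB_not_mem hue]
        rw [if_neg (fun hc : e = s(u, x) => hue (hc ▸ Sym2.mem_mk_left u x))]
        ring
    rw [Finset.sum_congr rfl hterm, Finset.sum_ite_eq' G.edgeSet.toFinset s(u, x) (fun e => -w e)]
    by_cases hadj : G.Adj u x
    · rw [if_pos (by rwa [Set.mem_toFinset])]
      simp [lap, h, hadj]
    · rw [if_neg (by rwa [Set.mem_toFinset, SimpleGraph.mem_edgeSet])]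
      simp [lap, h, hadj]

section Flow
variable {H : SimpleGraph V}

def flow {x y : V} (p : H.Walk x y) (e : Sym2 V) : ℝ :=
  (p.darts.map (fun d => if d.edge = e then sgn d.toProd.1 d.toProd.2 else 0)).sum

lemma flow_nil {x : V} (e : Sym2 V) : flow (SimpleGraph.Walk.nil : H.Walk x x) e = 0 := rfl

lemma flow_cons {x z y : V} (h : H.Adj x z) (q : H.Walk z y) (e : Sym2 V) :
    flow (SimpleGraph.Walk.cons h q) e
      = (if s(x, z) = e then sgn x z else 0) + flow q e := by
  simp [flow, SimpleGraph.Walk.darts_cons, SimpleGraph.Dart.edge]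
  congr

lemma flow_not_mem {x y : V} (p : H.Walk x y) {e : Sym2 V} (he : e ∉ p.edges) :
    flow p e = 0 := by
  refine List.sum_eq_zero fun t ht => ?_
  simp only [List.mem_map] at ht
  obtain ⟨d, hd, rfl⟩ := ht
  rw [if_neg fun hc => he (by rw [← hc]; exact List.mem_map_of_mem hd)]

lemma sgn_cases (a b : V) : sgn a b = 1 ∨ sgn a b = -1 := by
  unfold sgn; split <;> simp

lemma flow_mem_nodup {x y : V} (p : H.Walk x y) (hnd : p.edges.Nodup) {e : Sym2 V}
    (he : e ∈ p.edges) : flow p e = 1 ∨ flow p e = -1 := by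
  induction p with
  | nil => simp at he
  | cons h q ih =>
    rw [SimpleGraph.Walk.edges_cons] at he hnd
    rw [flow_cons]
    rcases List.mem_cons.mp he with rfl | hmem
    · rw [if_pos rfl, flow_not_mem q (List.nodup_cons.mp hnd).1, add_zero]
      exact sgn_cases _ _
    · rw [if_neg (fun hc : s(_,_) = e => (List.nodup_cons.mp hnd).1 (hc ▸ hmem)), zero_add]
      exact ih (List.nodup_cons.mp hnd).2 hmem

lemma sum_incB_flow {x y : V} (p : H.Walk x y) (E : Finset (Sym2 V))
    (hE : ∀ e ∈ p.edges, e ∈ E) (u : V) :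
    ∑ e ∈ E, incB u e * flow p e
      = (if u = x then (1:ℝ) else 0) - (if u = y then 1 else 0) := by
  induction p with
  | nil => simp [flow_nil]
  | cons h q ih =>
    simp only [flow_cons, mul_add, Finset.sum_add_distrib]
    rename_i a c _
    have h1 : ∑ e ∈ E, incB u e * (if s(a, c) = e then sgn a c else 0)
        = incB u s(a, c) * sgn a c := by
      rw [Finset.sum_eq_single s(a, c)]
      · rw [if_pos rfl]
      · intro e _ hne
        rw [if_neg (fun hc => hne hc.symm), mul_zero]
      · intro habs
        exact absurd (hE s(a, c) (by simp [SimpleGraph.Walk.edges_cons])) habs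
    rw [h1, ih (fun e hee => hE e (by simp [SimpleGraph.Walk.edges_cons, hee]))]
    rw [incB_eq h.ne u]
    have : sgn a c * sgn a c = 1 := sgn_sq a c
    by_cases hua : u = a <;> by_cases huc : u = c <;>
      simp [hua, huc] <;> ring_nf <;>
      simp_all <;> ring_nf <;> simp [sq, this, sgn_cases] <;> linarith [this]

end Flow

lemma exists_parent {H : SimpleGraph V} (hc : H.Connected) {r v : V} (hv : v ≠ r) :
    ∃ u, H.Adj v u ∧ H.dist u r + 1 = H.dist v r := by
  obtain ⟨p, hp⟩ := (hc v r).exists_walk_length_eq_dist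
  cases p with
  | nil => exact absurd rfl hv
  | @cons _ z _ h q =>
    refine ⟨z, h, ?_⟩
    have h1 : H.dist z r ≤ q.length := SimpleGraph.dist_le q
    have h2 : H.dist v r ≤ H.dist v z + H.dist z r := hc.dist_triangle
    have h3 : H.dist v z ≤ 1 := SimpleGraph.dist_le (SimpleGraph.Walk.cons h SimpleGraph.Walk.nil)
    rw [SimpleGraph.Walk.length_cons] at hp
    omega

lemma det_of_triangular_inj {m : Type*} [Fintype m] [DecidableEq m] (M : Matrix m m ℝ)
    (b : m → ℕ) (hb : Function.Injective b) (h : ∀ i j, b j < b i → M i j = 0) :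
    M.det = ∏ i, M i i := by
  have hbt : M.BlockTriangular b := fun i j hij => h i j hij
  rw [hbt.det, Finset.prod_image (fun a _ a' _ haa => hb haa)]
  refine Finset.prod_congr rfl fun i _ => ?_
  haveI : Unique {a // b a = b i} :=
    ⟨⟨⟨i, rfl⟩⟩, by rintro ⟨a, ha⟩; exact Subtype.ext (hb ha)⟩
  rw [Matrix.det_unique]
  have hd : (default : {a // b a = b i}) = ⟨i, rfl⟩ := Subsingleton.elim _ _
  rw [hd]
  simp [Matrix.toSquareBlock_def]

lemma sum_indicator_incB {H' : SimpleGraph V} {e : Sym2 V} (he : e ∈ H'.edgeSet) (c : V → ℝ)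
    (hc : ∀ a b, H'.Adj a b → c a = c b) : ∑ y : V, c y * incB y e = 0 := by
  induction e using Sym2.ind with
  | _ a b =>
    rw [SimpleGraph.mem_edgeSet] at he
    have hab : a ≠ b := he.ne
    have : ∀ y : V, c y * incB y s(a, b)
        = sgn a b * ((if y = a then c y else 0) - (if y = b then c y else 0)) := by
      intro y
      rw [incB_eq hab]
      by_cases h1 : y = a <;> by_cases h2 : y = b <;> simp [h1, h2, hab] <;> ring_nf <;> simp [hab, Ne.symm hab] <;> ring
    simp only [this]
    rw [← Finset.mul_sum, Finset.sum_sub_distrib]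
    simp [Finset.sum_ite_eq' Finset.univ, hc a b he]


end MTTaux


open MTTaux Matrix in
/-- Matrix Tree Theorem: the total spanning-tree weight equals
`det(L_G^{[r]})`. -/
theorem stmt3 (G : SimpleGraph V) (w : Sym2 V → ℝ) (hw : ∀ e ∈ G.edgeSet, 0 ≤ w e)
    (r : V) :
    ∑ H ∈ spanningTrees G, tw w H = (del r (lap G w)).det := by
  clear hw
  classical
  symm
  set E := G.edgeSet.toFinset with hEdef
  set Bm : Matrix {x : V // x ≠ r} ↥E ℝ := Matrix.of (fun v e => incB v.1 e.1) with hBm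
  set Cm : Matrix ↥E {x : V // x ≠ r} ℝ :=
    Matrix.of (fun e v => w e.1 * incB v.1 e.1) with hCm
  have hBC : del r (lap G w) = Bm * Cm := by
    ext u x
    rw [Matrix.mul_apply]
    show lap G w u.1 x.1 = _
    rw [lap_factor]
    rw [← Finset.sum_attach E (fun e => w e * (incB u.1 e * incB x.1 e))]
    rw [show (Finset.univ : Finset ↥E) = E.attach from rfl]
    exact Finset.sum_congr rfl fun e _ => by simp [hBm, hCm]; ring
  rw [hBC, det_mul_expand]
  set SH : SimpleGraph V → Finset ↥E :=
    fun H => Finset.univ.filter (fun e => e.1 ∈ H.edgeSet) with hSH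
  rw [← Finset.sum_fiberwise ((Finset.univ : Finset ({x : V // x ≠ r} → ↥E)).filter
      Function.Injective) (fun g => Finset.image g Finset.univ)
      (fun g => (∏ i, Bm i (g i)) * (Cm.submatrix g id).det)]
  rw [← Finset.sum_fiberwise (spanningTrees G) SH (tw w)]
  refine Finset.sum_congr rfl fun S _ => ?_
  have hucard : Fintype.card {x : V // x ≠ r} = Fintype.card V - 1 := by
    rw [Fintype.card_subtype_compl, Fintype.card_subtype_eq]
  by_cases hS : ∃ H, H ∈ spanningTrees G ∧ SH H = S
  · obtain ⟨H, hHmem, hHS⟩ := hS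
    obtain ⟨hle, hT⟩ : H ≤ G ∧ H.IsTree := by
      simpa [spanningTrees] using hHmem
    have hc := hT.isConnected
    -- RHS is tw w H
    have hRHS : (spanningTrees G).filter (fun H' => SH H' = S) = {H} := by
      ext H'
      simp only [Finset.mem_filter, Finset.mem_singleton]
      constructor
      · rintro ⟨hmem', hS'⟩
        obtain ⟨hle', _⟩ : H' ≤ G ∧ H'.IsTree := by simpa [spanningTrees] using hmem'
        apply SimpleGraph.edgeSet_inj.mp
        ext e
        constructor
        · intro he
          have heG : e ∈ G.edgeSet := SimpleGraph.edgeSet_mono hle' he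
          have : (⟨e, by rwa [hEdef, Set.mem_toFinset]⟩ : ↥E) ∈ SH H' := by
            simp [hSH, he]
          rw [hS', ← hHS] at this
          simpa [hSH] using this
        · intro he
          have heG : e ∈ G.edgeSet := SimpleGraph.edgeSet_mono hle he
          have : (⟨e, by rwa [hEdef, Set.mem_toFinset]⟩ : ↥E) ∈ SH H := by
            simp [hSH, he]
          rw [hHS, ← hS'] at this
          simpa [hSH] using this
      · rintro rfl
        exact ⟨hHmem, hHS⟩
    rw [hRHS, Finset.sum_singleton]
    -- construct the parent bijection
    have hpar : ∀ v : {x : V // x ≠ r}, ∃ u, H.Adj v.1 u ∧ H.dist u r + 1 = H.dist v.1 r :=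
      fun v => exists_parent hc v.2
    choose par hadj hdist using hpar
    set φ : {x : V // x ≠ r} → ↥E := fun v =>
      ⟨s(v.1, par v), by rw [hEdef, Set.mem_toFinset]; exact SimpleGraph.edgeSet_mono hle (hadj v)⟩
      with hφ
    have hφinj : Function.Injective φ := by
      intro a b hab
      have h2 : s(a.1, par a) = s(b.1, par b) := congrArg Subtype.val hab
      rcases Sym2.eq_iff.mp h2 with ⟨h3, _⟩ | ⟨h3, h4⟩
      · exact Subtype.ext h3
      · exfalso
        have d1 := hdist a
        have d2 := hdist b
        rw [h3, h4] at d1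
        omega
    have hScard : S.card = Fintype.card V - 1 := by
      have h1 : S.card = H.edgeFinset.card := by
        rw [← hHS]
        refine Finset.card_bij (fun e _ => e.1) ?_ ?_ ?_
        · intro e he
          rw [SimpleGraph.mem_edgeFinset]
          simpa [hSH] using he
        · intro e₁ h₁ e₂ h₂ h
          exact Subtype.ext h
        · intro e he
          rw [SimpleGraph.mem_edgeFinset] at he
          refine ⟨⟨e, by rw [hEdef, Set.mem_toFinset]; exact SimpleGraph.edgeSet_mono hle he⟩,
            by simp [hSH, he], rfl⟩
      rw [h1]
      have := hT.card_edgeFinset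
      omega
    have him : Finset.image φ Finset.univ = S := by
      refine Finset.eq_of_subset_of_card_le ?_ ?_
      · intro e he
        obtain ⟨v, _, rfl⟩ := Finset.mem_image.mp he
        rw [← hHS]
        simp only [hSH, Finset.mem_filter, Finset.mem_univ, true_and]
        exact hadj v
      · rw [Finset.card_image_of_injective _ hφinj, Finset.card_univ, hucard, hScard]
    rw [fiber_sum Bm Cm S φ hφinj him]
    set M : Matrix {x : V // x ≠ r} {x : V // x ≠ r} ℝ := Bm.submatrix id φ with hM
    have hMapp : ∀ u v, M u v = incB u.1 s(v.1, par v) := fun u v => rfl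
    have hdiag : ∀ v, M v v = sgn v.1 (par v) := by
      intro v
      rw [hMapp, incB_mk, if_pos rfl, if_neg (hadj v).ne, add_zero]
    have htri : M.det = ∏ v, M v v := by
      refine det_of_triangular_inj M
        (fun v => H.dist v.1 r * Fintype.card V + ord v.1) ?_ ?_
      · intro a b hab
        change H.dist a.1 r * Fintype.card V + ord a.1
          = H.dist b.1 r * Fintype.card V + ord b.1 at hab
        have ha : ord a.1 < Fintype.card V := (Fintype.equivFin V a.1).isLt
        have hb2 : ord b.1 < Fintype.card V := (Fintype.equivFin V b.1).isLt
        have key : ord a.1 = ord b.1 := by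
          have h1 := congrArg (fun t => t % Fintype.card V) hab
          simpa [Nat.mul_add_mod_of_lt ha, Nat.mul_add_mod_of_lt hb2] using h1
        exact Subtype.ext (ord_inj key)
      · intro i j hlt
        by_contra hne
        have hmem : i.1 ∈ s(j.1, par j) := by
          by_contra h'
          exact hne ((hMapp i j).trans (incB_not_mem h'))
        change H.dist j.1 r * Fintype.card V + ord j.1
          < H.dist i.1 r * Fintype.card V + ord i.1 at hlt
        have ha : ord i.1 < Fintype.card V := (Fintype.equivFin V i.1).isLt
        have hb2 : ord j.1 < Fintype.card V := (Fintype.equivFin V j.1).isLt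
        rcases Sym2.mem_iff.mp hmem with h1 | h1
        · have : i = j := Subtype.ext h1
          subst this
          omega
        · have hdj := hdist j
          rw [← h1] at hdj
          have hj : H.dist j.1 r = H.dist i.1 r + 1 := by omega
          rw [hj] at hlt
          have hmul : (H.dist i.1 r + 1) * Fintype.card V
              = H.dist i.1 r * Fintype.card V + Fintype.card V := Nat.succ_mul _ _
          omega
    have hC : (Cm.submatrix φ id).det = (∏ v, w (φ v).1) * M.det := by
      have heq : Cm.submatrix φ id
          = Matrix.of (fun v u => w (φ v).1 * M.transpose v u) := by
        ext v u
        simp [hCm, hM, hBm, Matrix.transpose_apply]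
      rw [heq, Matrix.det_mul_column, Matrix.det_transpose]
    have hdet2 : M.det * M.det = 1 := by
      rw [htri, ← Finset.prod_mul_distrib]
      refine Finset.prod_eq_one fun v _ => ?_
      rw [hdiag]
      exact sgn_sq _ _
    have hprodw : (∏ v, w (φ v).1) = tw w H := by
      have himg := Finset.prod_image (f := fun e : ↥E => w e.1) (g := φ)
        (s := (Finset.univ : Finset {x : V // x ≠ r})) (fun a _ b _ h => hφinj h)
      rw [him] at himg
      rw [← himg, tw]
      refine Finset.prod_bij (fun e _ => e.1) ?_ ?_ ?_ ?_
      · intro e he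
        rw [Set.mem_toFinset]
        rw [← hHS] at he
        simpa [hSH] using he
      · intro e₁ h₁ e₂ h₂ h
        exact Subtype.ext h
      · intro e he
        rw [Set.mem_toFinset] at he
        refine ⟨⟨e, by rw [hEdef, Set.mem_toFinset]; exact SimpleGraph.edgeSet_mono hle he⟩,
          by rw [← hHS]; simp [hSH, he], rfl⟩
      · intro e _
        rfl
    rw [hC]
    calc M.det * ((∏ v, w (φ v).1) * M.det)
        = (∏ v, w (φ v).1) * (M.det * M.det) := by ring
      _ = tw w H := by rw [hdet2, hprodw, mul_one]
  · push_neg at hS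
    have hRHS : ∑ H ∈ (spanningTrees G).filter (fun H' => SH H' = S), tw w H = 0 := by
      refine Finset.sum_eq_zero fun H hH => ?_
      rw [Finset.mem_filter] at hH
      exact absurd hH.2 (hS H hH.1)
    rw [hRHS]
    rcases Finset.eq_empty_or_nonempty
        (((Finset.univ : Finset ({x : V // x ≠ r} → ↥E)).filter Function.Injective).filter
          (fun g => Finset.image g Finset.univ = S)) with hemp | ⟨g0, hg0⟩
    · rw [hemp, Finset.sum_empty]
    · have hg0inj : Function.Injective g0 := by
        simp only [Finset.mem_filter, Finset.mem_univ, true_and] at hg0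
        exact hg0.1
      have hg0im : Finset.image g0 Finset.univ = S := by
        simp only [Finset.mem_filter, Finset.mem_univ, true_and] at hg0
        exact hg0.2
      rw [fiber_sum Bm Cm S g0 hg0inj hg0im]
      suffices hdet0 : (Bm.submatrix id g0).det = 0 by rw [hdet0, zero_mul]
      set U : Set (Sym2 V) := Subtype.val '' (S : Set ↥E) with hU
      have hUsub : U ⊆ G.edgeSet := by
        rintro e ⟨e', _, rfl⟩
        exact Set.mem_toFinset.mp e'.2
      set H' := SimpleGraph.fromEdgeSet U with hH'
      have hH'edge : H'.edgeSet = U := by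
        rw [hH', SimpleGraph.edgeSet_fromEdgeSet]
        ext e
        simp only [Set.mem_diff, Set.mem_setOf_eq, and_iff_left_iff_imp]
        intro heU
        exact SimpleGraph.not_isDiag_of_mem_edgeSet G (hUsub heU)
      have hmemS : ∀ e : ↥E, e.1 ∈ U ↔ e ∈ S := by
        intro e
        constructor
        · rintro ⟨e', he', heq⟩
          rwa [show e' = e from Subtype.ext heq] at he'
        · intro h
          exact ⟨e, h, rfl⟩
      have hle' : H' ≤ G := by
        rw [hH']
        exact le_of_le_of_eq (SimpleGraph.fromEdgeSet_mono hUsub)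
          (SimpleGraph.fromEdgeSet_edgeSet G)
      have hnotree : ¬ H'.IsTree := by
        intro ht
        refine hS H' ?_ ?_
        · simp [spanningTrees, hle', ht]
        · ext e
          simp only [hSH, Finset.mem_filter, Finset.mem_univ, true_and, hH'edge]
          exact hmemS e
      by_cases hconn : H'.Connected
      · -- connected: there is a cycle
        have hacyc : ¬ H'.IsAcyclic := fun ha => hnotree ⟨hconn, ha⟩
        rw [SimpleGraph.IsAcyclic] at hacyc
        push_neg at hacyc
        obtain ⟨x, p, hcyc⟩ := hacyc
        rw [← Matrix.exists_mulVec_eq_zero_iff]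
        have hedgesub : ∀ e ∈ p.edges, e ∈ U := by
          intro e he
          rw [← hH'edge]
          exact p.edges_subset_edgeSet he
        refine ⟨fun i => flow p (g0 i).1, ?_, ?_⟩
        · -- nonzero
          have hlen := hcyc.three_le_length
          have hne : p.edges ≠ [] := by
            intro habs
            have := SimpleGraph.Walk.length_edges p
            rw [habs] at this
            simp at this
            omega
          obtain ⟨e0, he0⟩ := List.exists_mem_of_ne_nil _ hne
          have he0E : e0 ∈ E := by
            rw [hEdef, Set.mem_toFinset]
            exact hUsub (hedgesub e0 he0)
          have he0S : (⟨e0, he0E⟩ : ↥E) ∈ S := (hmemS _).mp (hedgesub e0 he0)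
          obtain ⟨i, _, hi⟩ := Finset.mem_image.mp (hg0im ▸ he0S)
          intro habs
          have := congrFun habs i
          rw [hi] at this
          simp only [Pi.zero_apply] at this
          rcases flow_mem_nodup p hcyc.edges_nodup he0 with hf | hf <;>
            rw [hf] at this <;> norm_num at this
        · -- mulVec is zero
          funext u
          show ∑ i, Bm.submatrix id g0 u i * flow p (g0 i).1 = 0
          have h1 : ∑ i, Bm.submatrix id g0 u i * flow p (g0 i).1
              = ∑ e ∈ S, incB u.1 e.1 * flow p e.1 := by
            rw [← hg0im, Finset.sum_image (fun a _ b _ h => hg0inj h)]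
            rfl
          rw [h1]
          have h2 : ∑ e ∈ S, incB u.1 e.1 * flow p e.1
              = ∑ e ∈ (Finset.univ : Finset ↥E), incB u.1 e.1 * flow p e.1 := by
            refine Finset.sum_subset (Finset.subset_univ S) ?_
            intro e _ heS
            have : e.1 ∉ p.edges := fun hc => heS ((hmemS e).mp (hedgesub _ hc))
            rw [flow_not_mem p this, mul_zero]
          rw [h2, show (Finset.univ : Finset ↥E) = E.attach from rfl,
            Finset.sum_attach E (fun e => incB u.1 e * flow p e),
            sum_incB_flow p E (fun e he => by
              rw [hEdef, Set.mem_toFinset]; exact hUsub (hedgesub e he)) u.1]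
          ring
      · -- disconnected
        obtain ⟨x, hrx⟩ : ∃ x, ¬ H'.Reachable r x := by
          by_contra habs
          push_neg at habs
          have : Nonempty V := ⟨r⟩
          exact hconn (SimpleGraph.Connected.mk (fun a b => (habs a).symm.trans (habs b)))
        rw [← Matrix.exists_vecMul_eq_zero_iff]
        set cf : V → ℝ := fun y => if H'.Reachable x y then 1 else 0 with hcf
        have hcfr : cf r = 0 := by
          rw [hcf]
          simp only [if_neg (fun hc : H'.Reachable x r => hrx hc.symm)]
        have hxr : x ≠ r := by
          intro hc
          exact hrx (hc ▸ SimpleGraph.Reachable.refl x)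
        refine ⟨fun v => cf v.1, ?_, ?_⟩
        · intro habs
          have := congrFun habs ⟨x, hxr⟩
          rw [hcf] at this
          simp at this
        · funext j
          show ∑ v, cf v.1 * Bm.submatrix id g0 v j = 0
          have hjS : g0 j ∈ S := by
            rw [← hg0im]
            exact Finset.mem_image_of_mem g0 (Finset.mem_univ j)
          have hjedge : (g0 j).1 ∈ H'.edgeSet := by
            rw [hH'edge]
            exact (hmemS _).mpr hjS
          have hsum : ∑ v : {x : V // x ≠ r}, cf v.1 * incB v.1 (g0 j).1
              = ∑ y : V, cf y * incB y (g0 j).1 := by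
            rw [← Finset.sum_subtype (Finset.univ.erase r)
              (fun y => by simp [Finset.mem_erase, And.comm])
              (fun y => cf y * incB y (g0 j).1)]
            rw [← Finset.add_sum_erase Finset.univ _ (Finset.mem_univ r), hcfr]
            ring
          have hconst : ∀ a b, H'.Adj a b → cf a = cf b := by
            intro a b hab
            rw [hcf]
            simp only
            by_cases hr : H'.Reachable x a
            · rw [if_pos hr, if_pos (hr.trans hab.reachable)]
            · rw [if_neg hr, if_neg (fun hc => hr (hc.trans hab.symm.reachable))]
          calc ∑ v, cf v.1 * Bm.submatrix id g0 v j
              = ∑ y : V, cf y * incB y (g0 j).1 := hsum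
            _ = 0 := sum_indicator_incB hjedge cf hconst
end
end

section
/- For a finite connected weighted graph G, a node v, degree weights ω, α > 0 and a fixed vertex r, the determinant det(L_{G_α}^{[r]}) equals P_v(-α), where G_α is G with each edge e incident to v rescaled by α^{ω(e)} and P_v(x) = Σ_k (-1)^k w(S_k) x^k is the degree polynomial of v. -/
open Finset Classical Polynomial

noncomputable section

variable {V : Type*} [Fintype V] [DecidableEq V]

namespace MTaux

/-- extend a function on non-root vertices to all of `V`, fixing `r`. -/
def ext (r : V) (f : {x : V // x ≠ r} → V) : V → V := fun x => if h : x = r then r else f ⟨x, h⟩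

def Grounded (r : V) (F : V → V) : Prop := ∀ u, ∃ k, F^[k] u = r

lemma iter_mem {F : V → V} {S : Set V} (hS : ∀ x ∈ S, F x ∈ S) {u : V} (hu : u ∈ S) :
    ∀ k, F^[k] u ∈ S := by
  intro k
  induction k with
  | zero => exact hu
  | succ n ih => rw [Function.iterate_succ_apply']; exact hS _ ih

lemma no_trap {r : V} {F : V → V} (hg : Grounded r F) {S : Set V} (hr : r ∉ S)
    (hS : ∀ x ∈ S, F x ∈ S) {u : V} (hu : u ∈ S) : False := by
  obtain ⟨k, hk⟩ := hg u
  exact hr (hk ▸ iter_mem hS hu k)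

variable (r : V)

/-- the basic row vectors -/
def rv (u : {x : V // x ≠ r}) (y : V) : {x : V // x ≠ r} → ℝ :=
  fun x => (if (x : V) = u then 1 else 0) - (if (x : V) = y then 1 else 0)

lemma row_decomp (G : SimpleGraph V) (w : Sym2 V → ℝ) (u : {x : V // x ≠ r}) :
    (del r (lap G w)) u = ∑ y ∈ Finset.univ.filter (G.Adj u.1 ·), w s(u.1, y) • rv r u y := by
  funext x
  simp only [del, lap, Matrix.submatrix_apply, Finset.sum_apply, rv, Pi.smul_apply,
    smul_eq_mul]
  by_cases hxu : (u : V) = (x : V)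
  · rw [if_pos hxu]
    refine Finset.sum_congr rfl (fun y hy => ?_)
    have hadj : G.Adj u.1 y := (Finset.mem_filter.1 hy).2
    have h2 : ¬ ((x : V) = y) := fun h => G.ne_of_adj hadj (hxu.trans h)
    rw [if_pos hxu.symm, if_neg h2]
    ring
  · rw [if_neg hxu]
    have key : ∀ y ∈ Finset.univ.filter (G.Adj u.1 ·),
        w s(u.1, y) * ((if (x : V) = (u : V) then 1 else 0) - if (x : V) = y then 1 else 0)
        = if y = (x : V) then -w s(u.1, y) else 0 := by
      intro y hy
      rw [if_neg (fun h => hxu h.symm)]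
      by_cases hxy : (x : V) = y
      · rw [if_pos hxy, if_pos hxy.symm]; ring
      · rw [if_neg hxy, if_neg (fun h => hxy h.symm)]; ring
    rw [Finset.sum_congr rfl key, Finset.sum_ite_eq' _ (x : V) (fun y => -w s(u.1, y))]
    simp only [Finset.mem_filter, Finset.mem_univ, true_and]

def Dmat (f : {x : V // x ≠ r} → V) : Matrix {x : V // x ≠ r} {x : V // x ≠ r} ℝ :=
  Matrix.of fun u x => rv r u (f u) x

lemma det_expand (G : SimpleGraph V) (w : Sym2 V → ℝ) :
    (del r (lap G w)).det =
      ∑ f ∈ Fintype.piFinset (fun u : {x : V // x ≠ r} => Finset.univ.filter (G.Adj u.1 ·)),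
        (∏ u, w s(u.1, f u)) * (Dmat r f).det := by
  rw [show del r (lap G w)
      = fun u => ∑ y ∈ Finset.univ.filter (G.Adj u.1 ·), w s(u.1, y) • rv r u y
      from funext (row_decomp r G w)]
  change Matrix.detRowAlternating.toMultilinearMap
      (fun u => ∑ y ∈ Finset.univ.filter (G.Adj u.1 ·), w s(u.1, y) • rv r u y) = _
  rw [(Matrix.detRowAlternating (R := ℝ) (n := {x : V // x ≠ r})).toMultilinearMap.map_sum_finset
      (fun u y => w s(u.1, y) • rv r u y) (fun u => Finset.univ.filter (G.Adj u.1 ·))]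
  refine Finset.sum_congr rfl fun f hf => ?_
  rw [(Matrix.detRowAlternating (R := ℝ) (n := {x : V // x ≠ r})).toMultilinearMap.map_smul_univ
      (fun u => w s(u.1, f u)) (fun u => rv r u (f u))]
  rw [smul_eq_mul]
  rfl

lemma ext_apply (f : {x : V // x ≠ r} → V) (u : {x : V // x ≠ r}) : ext r f u.1 = f u :=
  dif_neg u.2

lemma fu_ne (f : {x : V // x ≠ r} → V) (hg : Grounded r (ext r f)) (u : {x : V // x ≠ r}) :
    f u ≠ u.1 := by
  intro h
  refine no_trap hg (S := {(u.1 : V)}) (fun hr => u.2 (Set.mem_singleton_iff.1 hr).symm)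
    ?_ rfl
  intro x hx
  rcases Set.mem_singleton_iff.1 hx with rfl
  rw [Set.mem_singleton_iff, ext_apply r f u, h]

lemma det_one (f : {x : V // x ≠ r} → V) (hg : Grounded r (ext r f)) :
    (Dmat r f).det = 1 := by
  rw [Matrix.det_apply]
  rw [Finset.sum_eq_single_of_mem (1 : Equiv.Perm {x : V // x ≠ r}) (Finset.mem_univ _)
    (fun σ _ hσ => ?offdiag)]
  · rw [Equiv.Perm.sign_one, one_smul]
    rw [Finset.prod_eq_one (fun i _ => ?_)]
    show rv r i (f i) i = 1
    have : ¬((i : V) = f i) := fun h => fu_ne r f hg i h.symm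
    simp [rv, this]
  case offdiag =>
    have hzero : ∏ i, (Dmat r f) (σ i) i = 0 := by
      by_contra hne
      have hfac : ∀ i, (Dmat r f) (σ i) i ≠ 0 := by
        intro i hi; exact hne (Finset.prod_eq_zero (Finset.mem_univ i) hi)
      have key : ∀ i, σ i ≠ i → f (σ i) = (i : V) := by
        intro i hi
        have h0 := hfac i
        simp only [Dmat, Matrix.of_apply, rv] at h0
        rw [if_neg (fun h : (i : V) = ((σ i : _) : V) => hi (Subtype.ext h.symm))] at h0
        by_contra hne2
        rw [if_neg (fun h => hne2 h.symm)] at h0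
        exact h0 (by ring)
      set S : Set V := {x | ∃ h : x ≠ r, σ ⟨x, h⟩ ≠ ⟨x, h⟩} with hSdef
      obtain ⟨i0, hi0⟩ : ∃ i, σ i ≠ i := by
        by_contra h; push_neg at h; exact hσ (Equiv.ext h)
      refine no_trap hg (S := S) (fun ⟨h, _⟩ => h rfl) ?_ (⟨i0.2, hi0⟩ : i0.1 ∈ S)
      rintro x ⟨hx, hσx⟩
      set i : {x : V // x ≠ r} := ⟨x, hx⟩
      set j := σ⁻¹ i with hj
      have hji : σ j = i := Equiv.apply_symm_apply σ i
      have hjne : σ j ≠ j := by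
        rw [hji]; exact fun h => hσx ((congrArg σ h).trans hji)
      have hfx : ext r f x = (j : V) := by
        rw [show ext r f x = f i from ext_apply r f i]
        have hk := key j hjne
        rwa [hji] at hk
      rw [hfx]
      exact ⟨j.2, hjne⟩
    rw [hzero, smul_zero]

lemma det_zero (f : {x : V // x ≠ r} → V) (hf' : ¬ Grounded r (ext r f)) :
    (Dmat r f).det = 0 := by
  rw [← Matrix.exists_vecMul_eq_zero_iff]
  rw [Grounded, not_forall] at hf'
  obtain ⟨u0, hu0⟩ := hf'
  push_neg at hu0
  set F := ext r f with hF
  obtain ⟨i, j, hij, hije⟩ : ∃ i j, i < j ∧ F^[i] u0 = F^[j] u0 := by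
    obtain ⟨a, b, hab, h⟩ := Finite.exists_ne_map_eq_of_infinite (fun k : ℕ => F^[k] u0)
    rcases lt_or_gt_of_ne hab with h' | h'
    exacts [⟨a, b, h', h⟩, ⟨b, a, h', h.symm⟩]
  set C : Finset V := (Finset.Ico i j).image (fun k => F^[k] u0) with hC
  have hrC : r ∉ C := by
    rw [hC]; intro hr
    obtain ⟨k, _, hk⟩ := Finset.mem_image.1 hr
    exact hu0 k hk
  have hmaps : ∀ x ∈ C, F x ∈ C := by
    intro x hx
    obtain ⟨k, hk, rfl⟩ := Finset.mem_image.1 hx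
    rw [Finset.mem_Ico] at hk
    rw [← Function.iterate_succ_apply' F k u0]
    rcases Nat.lt_or_ge (k + 1) j with h | h
    · exact Finset.mem_image.2 ⟨k + 1, Finset.mem_Ico.2 ⟨by omega, h⟩, rfl⟩
    · have hj : j = k + 1 := by omega
      subst hj
      rw [← hije]
      exact Finset.mem_image.2 ⟨i, Finset.mem_Ico.2 ⟨le_refl i, hij⟩, rfl⟩
  have hsurj : ∀ x ∈ C, ∃ y, ∃ hy : y ∈ C, F y = x := by
    intro x hx
    obtain ⟨k, hk, rfl⟩ := Finset.mem_image.1 hx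
    rw [Finset.mem_Ico] at hk
    rcases Nat.eq_or_lt_of_le hk.1 with h | h
    · refine ⟨F^[j - 1] u0, Finset.mem_image.2 ⟨j - 1, Finset.mem_Ico.2 ⟨by omega, by omega⟩, rfl⟩, ?_⟩
      rw [← Function.iterate_succ_apply' F (j - 1) u0]
      rw [show (j - 1).succ = j from by omega, ← hije, h]
    · refine ⟨F^[k - 1] u0, Finset.mem_image.2 ⟨k - 1, Finset.mem_Ico.2 ⟨by omega, by omega⟩, rfl⟩, ?_⟩
      rw [← Function.iterate_succ_apply' F (k - 1) u0]
      rw [show (k - 1).succ = k from by omega]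
  have hinj : ∀ a₁ ∈ C, ∀ a₂ ∈ C, F a₁ = F a₂ → a₁ = a₂ :=
    fun a₁ h₁ a₂ h₂ h =>
      Finset.inj_on_of_surj_on_of_card_le (fun a _ => F a) (fun a ha => hmaps a ha)
        (fun b hb => hsurj b hb) (le_refl _) h₁ h₂ h
  have hCne : F^[i] u0 ∈ C := Finset.mem_image.2 ⟨i, Finset.mem_Ico.2 ⟨le_refl i, hij⟩, rfl⟩
  refine ⟨fun x => if (x : V) ∈ C then 1 else 0, ?_, ?_⟩
  · intro h0
    have h1 : F^[i] u0 ≠ r := hu0 i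
    have := congrFun h0 ⟨F^[i] u0, h1⟩
    rw [if_pos hCne] at this
    exact one_ne_zero this
  · funext x
    show (∑ u : {x : V // x ≠ r}, (if (u : V) ∈ C then (1:ℝ) else 0) * Dmat r f u x) = 0
    have hterm : ∀ u : {x : V // x ≠ r}, (if (u : V) ∈ C then (1:ℝ) else 0) * Dmat r f u x
        = (fun z => if z ∈ C then (((if (x : V) = z then (1:ℝ) else 0)
            - (if (x : V) = F z then 1 else 0))) else 0) u.1 := by
      intro u
      by_cases hu : (u : V) ∈ C
      · simp only [if_pos hu, one_mul]
        show rv r u (f u) x = _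
        rw [rv, hF, ext_apply r f u]
      · simp only [if_neg hu, zero_mul]
    rw [Finset.sum_congr rfl (fun u _ => hterm u)]
    set g : V → ℝ := fun z => if z ∈ C then (((if (x : V) = z then (1:ℝ) else 0)
        - (if (x : V) = F z then 1 else 0))) else 0 with hgdef
    have hsub := Finset.sum_subtype (p := fun x => x ≠ r) (F := by infer_instance) ({r}ᶜ : Finset V)
      (fun x => by simp) g
    rw [show (∑ u : {x : V // x ≠ r},
        (fun z => if z ∈ C then (((if (x : V) = z then (1:ℝ) else 0)
        - (if (x : V) = F z then 1 else 0))) else 0) u.1) = ∑ u : {x : V // x ≠ r}, g u.1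
      from rfl, ← hsub]
    have hr0 : g r = 0 := by rw [hgdef]; exact if_neg hrC
    rw [show ({r}ᶜ : Finset V) = Finset.univ \ {r} from by simp [Finset.compl_eq_univ_sdiff]]
    rw [Finset.sum_sdiff_eq_sub (Finset.subset_univ _), Finset.sum_singleton, hr0, sub_zero]
    rw [hgdef, Finset.sum_ite_mem, Finset.univ_inter, Finset.sum_sub_distrib]
    have h2 : (∑ z ∈ C, if (x : V) = F z then (1:ℝ) else 0) = ∑ z ∈ C, if (x : V) = z then (1:ℝ) else 0 :=
      Finset.sum_bij (fun a _ => F a) (fun a ha => hmaps a ha) hinj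
        (fun b hb => hsurj b hb) (fun a _ => rfl)
    rw [h2, sub_self]

def emap (f : {x : V // x ≠ r} → V) : {x : V // x ≠ r} → Sym2 V := fun u => s(u.1, f u)

def Tf (f : {x : V // x ≠ r} → V) : SimpleGraph V :=
  SimpleGraph.fromRel (fun a b => ∃ h : a ≠ r, b = f ⟨a, h⟩)

lemma emap_inj (f : {x : V // x ≠ r} → V) (hg : Grounded r (ext r f)) :
    Function.Injective (emap r f) := by
  intro u u' h
  rw [emap, emap, Sym2.eq_iff] at h
  rcases h with ⟨h1, _⟩ | ⟨h1, h2⟩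
  · exact Subtype.ext h1
  · by_cases huu : u = u'
    · exact huu
    · exfalso
      refine no_trap hg (S := {(u.1 : V), (u'.1 : V)}) ?_ ?_ (Or.inl rfl)
      · rintro (h | h) <;> [exact u.2 h.symm; exact u'.2 h.symm]
      · rintro x (rfl | rfl)
        · rw [ext_apply r f u, h2]; exact Or.inr rfl
        · rw [ext_apply r f u', ← h1]; exact Or.inl rfl

lemma mem_Tf_edgeSet (f : {x : V // x ≠ r} → V) (hg : Grounded r (ext r f)) (e : Sym2 V) :
    e ∈ (Tf r f).edgeSet ↔ ∃ u, emap r f u = e := by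
  induction e using Sym2.ind with
  | _ a b =>
    rw [SimpleGraph.mem_edgeSet, Tf, SimpleGraph.fromRel_adj]
    constructor
    · rintro ⟨hab, ⟨h, rfl⟩ | ⟨h, rfl⟩⟩
      · exact ⟨⟨a, h⟩, rfl⟩
      · exact ⟨⟨b, h⟩, Sym2.eq_swap⟩
    · rintro ⟨u, hu⟩
      rw [emap, Sym2.eq_iff] at hu
      rcases hu with ⟨rfl, rfl⟩ | ⟨rfl, rfl⟩
      · exact ⟨fun h => fu_ne r f hg u h.symm, Or.inl ⟨u.2, rfl⟩⟩
      · exact ⟨fun h => fu_ne r f hg u h, Or.inr ⟨u.2, rfl⟩⟩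

lemma Tf_edgeFinset (f : {x : V // x ≠ r} → V) (hg : Grounded r (ext r f)) :
    (Tf r f).edgeFinset = Finset.univ.image (emap r f) := by
  ext e
  rw [SimpleGraph.mem_edgeFinset, mem_Tf_edgeSet r f hg, Finset.mem_image]
  constructor
  · rintro ⟨u, hu⟩; exact ⟨u, Finset.mem_univ u, hu⟩
  · rintro ⟨u, _, hu⟩; exact ⟨u, hu⟩

lemma Tf_card (f : {x : V // x ≠ r} → V) (hg : Grounded r (ext r f)) :
    (Tf r f).edgeFinset.card + 1 = Fintype.card V := by
  rw [Tf_edgeFinset r f hg, Finset.card_image_of_injective _ (emap_inj r f hg),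
    Finset.card_univ]
  have h1 : Fintype.card {x : V // x ≠ r} = Fintype.card V - 1 := by
    rw [Fintype.card_subtype_compl (fun x : V => x = r), Fintype.card_subtype_eq]
  rw [h1, Nat.sub_add_cancel]
  exact Fintype.card_pos_iff.2 ⟨r⟩

lemma Tf_reach (f : {x : V // x ≠ r} → V) (hg : Grounded r (ext r f)) (x : V) :
    (Tf r f).Reachable x r := by
  obtain ⟨k, hk⟩ := hg x
  induction k generalizing x with
  | zero =>
    rw [Function.iterate_zero_apply] at hk
    rw [hk]
  | succ n ih =>
    by_cases hx : x = r
    · rw [hx]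
    · have hadj : (Tf r f).Adj x (ext r f x) := by
        rw [Tf, SimpleGraph.fromRel_adj]
        refine ⟨?_, Or.inl ⟨hx, (ext_apply r f ⟨x, hx⟩)⟩⟩
        rw [ext_apply r f ⟨x, hx⟩]
        exact fun h => fu_ne r f hg ⟨x, hx⟩ h.symm
      rw [Function.iterate_succ_apply] at hk
      exact hadj.reachable.trans (ih _ hk)

lemma Tf_connected (f : {x : V // x ≠ r} → V) (hg : Grounded r (ext r f)) :
    (Tf r f).Connected := by
  rw [SimpleGraph.connected_iff]
  exact ⟨fun a b => (Tf_reach r f hg a).trans (Tf_reach r f hg b).symm, ⟨r⟩⟩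

lemma Tf_acyclic (f : {x : V // x ≠ r} → V) (hg : Grounded r (ext r f)) :
    (Tf r f).IsAcyclic := by
  intro x c hc
  have htrail : c.IsTrail := ((SimpleGraph.Walk.isCycle_def c).1 hc).1
  have htail : c.support.tail.Nodup := ((SimpleGraph.Walk.isCycle_def c).1 hc).2.2
  have hlen3 : 3 ≤ c.length := hc.three_le_length
  -- edge finset of the cycle
  set ES : Finset (Sym2 V) := c.edges.toFinset with hES
  have hEScard : ES.card = c.length := by
    rw [hES, List.toFinset_card_of_nodup htrail.edges_nodup, SimpleGraph.Walk.length_edges]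
  set P : Finset {x : V // x ≠ r} := Finset.univ.filter (fun u => emap r f u ∈ ES) with hP
  have himg : P.image (emap r f) = ES := by
    apply Finset.Subset.antisymm
    · intro e he
      obtain ⟨u, hu, rfl⟩ := Finset.mem_image.1 he
      exact (Finset.mem_filter.1 hu).2
    · intro e he
      have he' : e ∈ (Tf r f).edgeSet :=
        SimpleGraph.Walk.edges_subset_edgeSet c (List.mem_toFinset.1 he)
      obtain ⟨u, hu⟩ := (mem_Tf_edgeSet r f hg e).1 he'
      exact Finset.mem_image.2 ⟨u, Finset.mem_filter.2 ⟨Finset.mem_univ u, hu ▸ he⟩, hu⟩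
  have hPcard : P.card = c.length := by
    rw [← hEScard, ← himg, Finset.card_image_of_injective _ (emap_inj r f hg)]
  set K : Finset V := P.image (fun u => (u.1 : V)) with hK
  have hKcard : K.card = c.length := by
    rw [hK, Finset.card_image_of_injective _ Subtype.val_injective, hPcard]
  have hKsup : K ⊆ c.support.toFinset := by
    intro y hy
    obtain ⟨u, hu, rfl⟩ := Finset.mem_image.1 hy
    have he : s(u.1, f u) ∈ c.edges := List.mem_toFinset.1 (Finset.mem_filter.1 hu).2
    exact List.mem_toFinset.2 (SimpleGraph.Walk.fst_mem_support_of_mem_edges c he)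
  have hlensup : c.support.length = c.length + 1 := SimpleGraph.Walk.length_support c
  have hlentail : c.support.tail.length = c.length := by
    have h4 : c.support.tail.length = c.support.length - 1 := List.length_tail
    omega
  have hx_tail : x ∈ c.support.tail := by
    obtain ⟨y, hadj, q, rfl⟩ := (SimpleGraph.Walk.not_nil_iff).1 hc.not_nil
    rw [SimpleGraph.Walk.support_cons]
    exact q.end_mem_support
  have hsupfin : c.support.toFinset = c.support.tail.toFinset := by
    rw [SimpleGraph.Walk.support_eq_cons c, List.toFinset_cons]
    exact Finset.insert_eq_self.2 (List.mem_toFinset.2 hx_tail)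
  have hsupcard : c.support.toFinset.card ≤ c.length := by
    rw [hsupfin, List.toFinset_card_of_nodup htail]
    omega
  have hKeq : K = c.support.toFinset :=
    Finset.eq_of_subset_of_card_le hKsup (by omega)
  -- now derive the trap contradiction
  have hrsup : r ∉ c.support := by
    intro hr
    have : r ∈ K := hKeq ▸ List.mem_toFinset.2 hr
    obtain ⟨u, _, hu⟩ := Finset.mem_image.1 this
    exact u.2 hu
  refine no_trap hg (S := {y | y ∈ c.support}) hrsup ?_ (c.start_mem_support)
  intro y hy
  have : y ∈ K := hKeq ▸ List.mem_toFinset.2 hy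
  obtain ⟨u, hu, rfl⟩ := Finset.mem_image.1 this
  have he : s(u.1, f u) ∈ c.edges := List.mem_toFinset.1 (Finset.mem_filter.1 hu).2
  show ext r f u.1 ∈ c.support
  rw [ext_apply r f u]
  exact SimpleGraph.Walk.snd_mem_support_of_mem_edges c he

lemma Tf_isTree (f : {x : V // x ≠ r} → V) (hg : Grounded r (ext r f)) :
    (Tf r f).IsTree :=
  ⟨Tf_connected r f hg, Tf_acyclic r f hg⟩

lemma Tf_le (G : SimpleGraph V) (f : {x : V // x ≠ r} → V) (hN : ∀ u, G.Adj u.1 (f u)) :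
    Tf r f ≤ G := by
  intro a b hab
  rw [Tf, SimpleGraph.fromRel_adj] at hab
  rcases hab with ⟨hne, ⟨h, rfl⟩ | ⟨h, rfl⟩⟩
  · exact hN ⟨a, h⟩
  · exact (hN ⟨b, h⟩).symm

lemma tw_Tf (w : Sym2 V → ℝ) (f : {x : V // x ≠ r} → V) (hg : Grounded r (ext r f)) :
    tw w (Tf r f) = ∏ u, w (emap r f u) := by
  rw [tw, show (Tf r f).edgeSet.toFinset = (Tf r f).edgeFinset from rfl,
    Tf_edgeFinset r f hg, Finset.prod_image (fun u _ u' _ h => emap_inj r f hg h)]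

lemma Tf_inj (f g : {x : V // x ≠ r} → V) (hgf : Grounded r (ext r f))
    (hgg : Grounded r (ext r g)) (h : Tf r f = Tf r g) : f = g := by
  by_contra hne
  obtain ⟨u0, hu0⟩ : ∃ u, f u ≠ g u := by
    by_contra h'; push_neg at h'; exact hne (funext h')
  set S : Set V := {x | ∃ h : x ≠ r, f ⟨x, h⟩ ≠ g ⟨x, h⟩} with hSdef
  refine no_trap hgf (S := S) (fun ⟨hr, _⟩ => hr rfl) ?_ (⟨u0.2, hu0⟩ : u0.1 ∈ S)
  rintro x ⟨hx, hfg⟩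
  set u : {x : V // x ≠ r} := ⟨x, hx⟩
  have hedge : emap r f u ∈ (Tf r g).edgeSet := by
    rw [← h]
    exact (mem_Tf_edgeSet r f hgf _).2 ⟨u, rfl⟩
  obtain ⟨u', hu'⟩ := (mem_Tf_edgeSet r g hgg _).1 hedge
  rw [emap, emap, Sym2.eq_iff] at hu'
  rcases hu' with ⟨h1, h2⟩ | ⟨h1, h2⟩
  · have : u' = u := Subtype.ext h1
    rw [this] at h2
    exact absurd h2.symm hfg
  · have hyr : f u ≠ r := fun hh => u'.2 (h1.trans hh)
    show ext r f x ∈ S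
    rw [show ext r f x = f u from ext_apply r f u]
    refine ⟨hyr, ?_⟩
    have hu'eq : u' = ⟨f u, hyr⟩ := Subtype.ext h1
    rw [← hu'eq, h2]
    intro hcyc
    -- f u' = x gives a 2-cycle for ext r f
    refine no_trap hgf (S := {x, f u}) ?_ ?_ (Or.inl rfl)
    · rintro (hh | hh) <;> [exact hx hh.symm; exact hyr hh.symm]
    · rintro z (rfl | rfl)
      · rw [show ext r f z = f u from ext_apply r f u]; exact Or.inr rfl
      · rw [show ext r f (f u) = f ⟨f u, hyr⟩ from ext_apply r f ⟨f u, hyr⟩, ← hu'eq, hcyc]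
        exact Or.inl rfl

lemma Tf_surj (G : SimpleGraph V) (H : SimpleGraph V) (hHG : H ≤ G) (hH : H.IsTree) :
    ∃ f ∈ Fintype.piFinset (fun u : {x : V // x ≠ r} => Finset.univ.filter (G.Adj u.1 ·)),
      Grounded r (ext r f) ∧ Tf r f = H := by
  have hconn := hH.isConnected
  have hstep : ∀ u : {x : V // x ≠ r}, ∃ y, H.Adj u.1 y ∧ H.dist y r < H.dist u.1 r := by
    intro u
    have hdne : H.dist u.1 r ≠ 0 := by
      rw [SimpleGraph.dist_ne_zero_iff_ne_and_reachable]
      exact ⟨u.2, hconn.preconnected u.1 r⟩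
    obtain ⟨p, hp⟩ := SimpleGraph.exists_walk_of_dist_ne_zero hdne
    have hpnil : ¬p.Nil := by
      intro hnil
      rw [SimpleGraph.Walk.nil_iff_length_eq] at hnil
      exact hdne (hp ▸ hnil)
    obtain ⟨y, hadj, q, rfl⟩ := (SimpleGraph.Walk.not_nil_iff).1 hpnil
    refine ⟨y, hadj, ?_⟩
    have h1 : H.dist y r ≤ q.length := SimpleGraph.dist_le q
    have h2 : (SimpleGraph.Walk.cons hadj q).length = q.length + 1 :=
      SimpleGraph.Walk.length_cons hadj q
    omega
  choose pf hpf1 hpf2 using hstep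
  have hgr : Grounded r (ext r pf) := by
    intro x
    suffices h : ∀ n, ∀ x : V, H.dist x r ≤ n → ∃ k, (ext r pf)^[k] x = r from
      h (H.dist x r) x le_rfl
    intro n
    induction n with
    | zero =>
      intro x hx0
      by_cases hxr : x = r
      · exact ⟨0, hxr⟩
      · exfalso
        have : H.dist x r ≠ 0 := by
          rw [SimpleGraph.dist_ne_zero_iff_ne_and_reachable]
          exact ⟨hxr, hconn.preconnected x r⟩
        omega
    | succ n ih =>
      intro x hx0
      by_cases hxr : x = r
      · exact ⟨0, hxr⟩
      · have hlt := hpf2 ⟨x, hxr⟩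
        have hxx : H.dist ((⟨x, hxr⟩ : {x : V // x ≠ r}) : V) r = H.dist x r := rfl
        rw [hxx] at hlt
        obtain ⟨k, hk⟩ := ih (pf ⟨x, hxr⟩) (by omega)
        refine ⟨k + 1, ?_⟩
        rw [Function.iterate_succ_apply,
          show ext r pf x = pf ⟨x, hxr⟩ from ext_apply r pf ⟨x, hxr⟩, hk]
  refine ⟨pf, ?_, hgr, ?_⟩
  · rw [Fintype.mem_piFinset]
    intro u
    rw [Finset.mem_filter]
    exact ⟨Finset.mem_univ _, hHG (hpf1 u)⟩
  · have hle : Tf r pf ≤ H := Tf_le r H pf hpf1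
    have hsub : (Tf r pf).edgeFinset ⊆ H.edgeFinset :=
      SimpleGraph.edgeFinset_subset_edgeFinset.2 hle
    have hc1 := Tf_card r pf hgr
    have hc2 := hH.card_edgeFinset
    exact SimpleGraph.edgeFinset_inj.1 (Finset.eq_of_subset_of_card_le hsub (by omega))

theorem matrixTree (G : SimpleGraph V) (w : Sym2 V → ℝ) :
    (del r (lap G w)).det = ∑ H ∈ spanningTrees G, tw w H := by
  rw [det_expand r G w]
  rw [← Finset.sum_filter_add_sum_filter_not
    (Fintype.piFinset (fun u : {x : V // x ≠ r} => Finset.univ.filter (G.Adj u.1 ·)))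
    (fun f => Grounded r (ext r f))]
  rw [show (∑ f ∈ Finset.filter (fun f => ¬ Grounded r (ext r f))
      (Fintype.piFinset (fun u : {x : V // x ≠ r} => Finset.univ.filter (G.Adj u.1 ·))),
      (∏ u, w s(u.1, f u)) * (Dmat r f).det) = 0 from
    Finset.sum_eq_zero (fun f hf => by
      rw [det_zero r f (Finset.mem_filter.1 hf).2, mul_zero]), add_zero]
  rw [Finset.sum_congr rfl (fun f hf => by
    rw [det_one r f (Finset.mem_filter.1 hf).2, mul_one])]
  refine Finset.sum_bij (fun f _ => Tf r f) ?_ ?_ ?_ ?_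
  · intro f hf
    obtain ⟨hfpi, hfg⟩ := Finset.mem_filter.1 hf
    rw [spanningTrees, Finset.mem_filter]
    refine ⟨Finset.mem_univ _, Tf_le r G f ?_, Tf_isTree r f hfg⟩
    intro u
    have := Fintype.mem_piFinset.1 hfpi u
    exact (Finset.mem_filter.1 this).2
  · intro f hf f' hf' heq
    exact Tf_inj r f f' (Finset.mem_filter.1 hf).2 (Finset.mem_filter.1 hf').2 heq
  · intro H hH
    rw [spanningTrees, Finset.mem_filter] at hH
    obtain ⟨f, hfpi, hfg, hfH⟩ := Tf_surj r G H hH.2.1 hH.2.2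
    exact ⟨f, Finset.mem_filter.2 ⟨hfpi, hfg⟩, hfH⟩
  · intro f hf
    rw [tw_Tf r w f (Finset.mem_filter.1 hf).2]
    rfl

end MTaux

/-- `det(L_{G_α}^{[r]}) = P_v(-α)` where `G_α` rescales each edge incident
to `v` by `α^{ω(e)}`. -/


theorem stmt4 (G : SimpleGraph V) (hG : G.Connected) (w : Sym2 V → ℝ)
    (hw : ∀ e ∈ G.edgeSet, 0 < w e) (ω : Sym2 V → ℕ) (v : V) (α : ℝ) (hα : 0 < α)
    (r : V) :
    (del r (lap G (fun e => if v ∈ e then α ^ ω e * w e else w e))).det =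
      (degPoly G w ω v).eval (-α) := by
  rw [MTaux.matrixTree r G (fun e => if v ∈ e then α ^ ω e * w e else w e)]
  rw [degPoly, Polynomial.eval_finset_sum]
  refine Finset.sum_congr rfl (fun H hH => ?_)
  rw [Polynomial.eval_mul, Polynomial.eval_pow, Polynomial.eval_C, Polynomial.eval_X]
  have key : tw (fun e => if v ∈ e then α ^ ω e * w e else w e) H
      = α ^ (degn ω v H) * tw w H := by
    rw [tw, tw, degn]
    rw [← Finset.prod_filter_mul_prod_filter_not H.edgeSet.toFinset (fun e => v ∈ e)
      (fun e => if v ∈ e then α ^ ω e * w e else w e)]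
    rw [← Finset.prod_filter_mul_prod_filter_not H.edgeSet.toFinset (fun e => v ∈ e) w]
    rw [Finset.prod_congr rfl (fun e he => if_pos (Finset.mem_filter.1 he).2),
      Finset.prod_congr rfl (fun e (he : e ∈ Finset.filter (fun e => ¬ v ∈ e) H.edgeSet.toFinset)
        => if_neg (Finset.mem_filter.1 he).2)]
    rw [Finset.prod_mul_distrib, Finset.prod_pow_eq_pow_sum]
    ring
  rw [key, show (-α) ^ degn ω v H = ((-1 : ℝ)) ^ degn ω v H * α ^ degn ω v H from
    neg_pow α (degn ω v H)]
  have h11 : ((-1 : ℝ)) ^ (degn ω v H) * ((-1 : ℝ)) ^ (degn ω v H) = 1 := by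
    rw [← mul_pow]; norm_num
  rw [show ((-1 : ℝ)) ^ degn ω v H * tw w H
      * (((-1 : ℝ)) ^ degn ω v H * α ^ degn ω v H)
      = (((-1 : ℝ)) ^ degn ω v H * ((-1 : ℝ)) ^ degn ω v H)
        * (α ^ degn ω v H * tw w H) from by ring, h11, one_mul]
end
end

section
/- For an edge ê = (u,v) of a finite connected weighted undirected graph G and a vertex r with r ≠ u and r ≠ v, the probability that ê belongs to a random spanning tree equals w(ê)·(ℓ_{uu} + ℓ_{vv} - 2ℓ_{uv}), where ℓ_{ij} denotes the (i,j) entry of (L_G^{[r]})^{-1}. -/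
set_option linter.unusedSectionVars false
set_option maxHeartbeats 1600000


open Finset Classical Polynomial

noncomputable section

variable {V : Type*} [Fintype V] [DecidableEq V]

namespace Stmt10Aux

def incEdges (G : SimpleGraph V) (r : V) (i : {x : V // x ≠ r}) : Finset (Sym2 V) :=
  G.edgeFinset.filter (fun e => (i : V) ∈ e)

def rowV (r : V) (i : {x : V // x ≠ r}) (e : Sym2 V) : {x : V // x ≠ r} → ℝ :=
  fun j => (if j = i then (1:ℝ) else 0) - (if ((j : V) ∈ e ∧ j ≠ i) then 1 else 0)

def nxt (r : V) (p : {x : V // x ≠ r} → Sym2 V) (i : {x : V // x ≠ r}) : V :=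
  if h : (i : V) ∈ p i then Sym2.Mem.other' h else (i : V)

def fstep (r : V) (p : {x : V // x ≠ r} → Sym2 V) (x : V) : V :=
  if h : x ≠ r then nxt r p ⟨x, h⟩ else r

def Good (r : V) (p : {x : V // x ≠ r} → Sym2 V) : Prop :=
  ∀ x : V, ∃ n : ℕ, (fstep r p)^[n] x = r

def NM (r : V) (p : {x : V // x ≠ r} → Sym2 V) :
    Matrix {x : V // x ≠ r} {x : V // x ≠ r} ℝ :=
  Matrix.of (fun i j => rowV r i (p i) j)

def PhiT (r : V) (p : {x : V // x ≠ r} → Sym2 V) : SimpleGraph V :=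
  SimpleGraph.fromEdgeSet ↑(Finset.image p Finset.univ)

section Basic

variable {G : SimpleGraph V} {r : V} {p : {x : V // x ≠ r} → Sym2 V}

lemma p_eq_nxt {i : {x : V // x ≠ r}} (hM : (i : V) ∈ p i) :
    p i = s((i : V), nxt r p i) := by
  rw [nxt, dif_pos hM]
  exact (Sym2.other_spec' hM).symm

lemma adj_nxt {i : {x : V // x ≠ r}} (hE : p i ∈ G.edgeFinset) (hM : (i : V) ∈ p i) :
    G.Adj (i : V) (nxt r p i) := by
  have h := SimpleGraph.mem_edgeFinset.mp hE
  rw [p_eq_nxt hM, SimpleGraph.mem_edgeSet] at h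
  exact h

lemma nxt_ne {i : {x : V // x ≠ r}} (hE : p i ∈ G.edgeFinset) (hM : (i : V) ∈ p i) :
    nxt r p i ≠ (i : V) :=
  (adj_nxt hE hM).ne'

lemma mem_p_iff {i : {x : V // x ≠ r}} (hE : p i ∈ G.edgeFinset) (hM : (i : V) ∈ p i)
    (j : {x : V // x ≠ r}) :
    ((j : V) ∈ p i ∧ j ≠ i) ↔ (j : V) = nxt r p i := by
  constructor
  · rintro ⟨hj, hne⟩
    rw [p_eq_nxt hM, Sym2.mem_iff] at hj
    rcases hj with h | h
    · exact absurd (Subtype.ext h) hne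
    · exact h
  · rintro h
    refine ⟨?_, ?_⟩
    · rw [p_eq_nxt hM, Sym2.mem_iff]; right; exact h
    · rintro rfl
      exact (nxt_ne hE hM) h.symm

lemma fstep_of_ne {x : V} (hx : x ≠ r) : fstep r p x = nxt r p ⟨x, hx⟩ := dif_pos hx

lemma fstep_r : fstep r p r = r := dif_neg (by simp)

lemma NM_apply (hp : ∀ i, p i ∈ incEdges G r i) (i j : {x : V // x ≠ r}) :
    NM r p i j = (if j = i then (1:ℝ) else 0) - (if (j:V) = nxt r p i then 1 else 0) := by
  have hE := (Finset.mem_filter.mp (hp i)).1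
  have hM := (Finset.mem_filter.mp (hp i)).2
  simp only [NM, Matrix.of_apply, rowV]
  congr 1
  by_cases h : (j:V) = nxt r p i
  · rw [if_pos ((mem_p_iff hE hM j).mpr h), if_pos h]
  · rw [if_neg (fun hc => h ((mem_p_iff hE hM j).mp hc)), if_neg h]

/-- Height: number of steps to reach `r`. -/
def ht (hg : Good r p) (x : V) : ℕ := Nat.find (hg x)

lemma ht_eq_zero_iff (hg : Good r p) (x : V) : ht hg x = 0 ↔ x = r := by
  rw [ht, Nat.find_eq_zero]
  simp

lemma ht_fstep_lt (hg : Good r p) {x : V} (hx : x ≠ r) :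
    ht hg (fstep r p x) < ht hg x := by
  have hpos : 0 < ht hg x := by
    rcases Nat.eq_zero_or_pos (ht hg x) with h | h
    · exact absurd ((ht_eq_zero_iff hg x).mp h) hx
    · exact h
  have hspec : (fstep r p)^[ht hg x] x = r := Nat.find_spec (hg x)
  have : (fstep r p)^[ht hg x - 1] (fstep r p x) = r := by
    rw [← Function.iterate_succ_apply, Nat.succ_eq_add_one, Nat.sub_add_cancel hpos]
    exact hspec
  calc ht hg (fstep r p x) ≤ ht hg x - 1 := Nat.find_le this
    _ < ht hg x := Nat.sub_lt hpos one_pos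

lemma ht_nxt_lt (hg : Good r p) (i : {x : V // x ≠ r}) :
    ht hg (nxt r p i) < ht hg (i : V) := by
  have := ht_fstep_lt hg i.2
  rwa [fstep_of_ne i.2, Subtype.coe_eta] at this

lemma det_NM_good (hp : ∀ i, p i ∈ incEdges G r i) (hg : Good r p) :
    (NM r p).det = 1 := by
  classical
  set b : {x : V // x ≠ r} → ℤ := fun i => -(ht hg (i : V) : ℤ) with hb
  have hBT : (NM r p).BlockTriangular b := by
    intro i j hij
    have hij' : ht hg (i : V) < ht hg (j : V) := by
      simp only [hb, neg_lt_neg_iff, Nat.cast_lt] at hij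
      exact hij
    have h1 : j ≠ i := by
      rintro rfl
      exact lt_irrefl _ hij'
    have h2 : (j : V) ≠ nxt r p i := by
      intro h
      have := ht_nxt_lt hg i
      rw [← h] at this
      exact absurd (this.trans hij') (lt_irrefl _)
    rw [NM_apply hp, if_neg h1, if_neg h2, sub_zero]
  rw [hBT.det]
  apply Finset.prod_eq_one
  intro k _
  have hblock : (NM r p).toSquareBlock b k = 1 := by
    ext ⟨i, hi⟩ ⟨j, hj⟩
    by_cases h : i = j
    · subst h
      simp only [Matrix.toSquareBlock_def, Matrix.one_apply_eq, Matrix.of_apply]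
      show NM r p i i = 1
      rw [NM_apply hp, if_pos rfl, if_neg (Ne.symm (nxt_ne (Finset.mem_filter.mp (hp i)).1
        (Finset.mem_filter.mp (hp i)).2)), sub_zero]
    · have hij : (⟨i, hi⟩ : {a // b a = k}) ≠ ⟨j, hj⟩ := by
        intro hc
        apply h
        exact congrArg (fun z => (z : {x : V // x ≠ r})) (Subtype.ext_iff.mp hc)
      simp only [Matrix.toSquareBlock_def, Matrix.one_apply_ne hij, Matrix.of_apply]
      have h2 : (j : V) ≠ nxt r p i := by
        intro hc
        have hlt := ht_nxt_lt hg i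
        rw [← hc] at hlt
        have : b i = b j := hi.trans hj.symm
        simp only [hb, neg_inj, Nat.cast_inj] at this
        rw [this] at hlt
        exact lt_irrefl _ hlt
      show NM r p i j = 0
      rw [NM_apply hp, if_neg (Ne.symm h), if_neg h2, sub_zero]
  rw [hblock, Matrix.det_one]

lemma det_NM_bad (hp : ∀ i, p i ∈ incEdges G r i) (hb : ¬ Good r p) :
    (NM r p).det = 0 := by
  classical
  simp only [Good] at hb
  push_neg at hb
  obtain ⟨x₀, hx₀⟩ := hb
  set f := fstep r p with hf
  have hiter : ∀ k n : ℕ, f^[n] (f^[k] x₀) ≠ r := by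
    intro k n
    rw [← Function.iterate_add_apply]
    exact hx₀ (n + k)
  obtain ⟨a, b, hab, heq⟩ := Finite.exists_ne_map_eq_of_infinite (fun k : ℕ => f^[k] x₀)
  -- normalize so that a < b
  obtain ⟨a, b, hlt, heq⟩ : ∃ a b : ℕ, a < b ∧ f^[a] x₀ = f^[b] x₀ := by
    rcases hab.lt_or_gt with h | h
    · exact ⟨a, b, h, heq⟩
    · exact ⟨b, a, h, heq.symm⟩
  set x' := f^[a] x₀ with hx'
  set m := b - a with hm'
  have hm : 0 < m := Nat.sub_pos_of_lt hlt
  have hxm : f^[m] x' = x' := by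
    have hmb : m + a = b := by omega
    rw [hx', ← Function.iterate_add_apply, hmb, ← heq]
  have hne : ∀ k : ℕ, f^[k] x' ≠ r := by
    intro k
    rw [hx', ← Function.iterate_add_apply]
    exact hx₀ (k + a)
  set ℓ : ℕ → {x : V // x ≠ r} := fun k => ⟨f^[k] x', hne k⟩ with hℓ
  set A : ℕ → ({x : V // x ≠ r} → ℝ) :=
    fun n => (fun j => if (j : V) = f^[n] x' then (1:ℝ) else 0) with hA
  have hrow : ∀ k : ℕ, (NM r p) (ℓ k) = A k - A (k + 1) := by
    intro k
    funext j
    have h1 : NM r p (ℓ k) j =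
        (if j = ℓ k then (1:ℝ) else 0) - (if (j:V) = nxt r p (ℓ k) then 1 else 0) :=
      NM_apply hp (ℓ k) j
    have h2 : nxt r p (ℓ k) = f^[k + 1] x' := by
      rw [Function.iterate_succ_apply']
      rw [hf, fstep_of_ne (hne k)]
    have h3 : (j = ℓ k) ↔ ((j : V) = f^[k] x') := by
      rw [Subtype.ext_iff]
    rw [h1, h2]
    simp only [Pi.sub_apply, hA]
    congr 1
    by_cases h : (j : V) = f^[k] x'
    · rw [if_pos (h3.mpr h), if_pos h]
    · rw [if_neg (fun hc => h (h3.mp hc)), if_neg h]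
  set g : {x : V // x ≠ r} → ℝ :=
    fun i => (((Finset.range m).filter (fun k => ℓ k = i)).card : ℝ) with hg
  have hsum : ∑ i, g i • (NM r p) i = 0 := by
    have h1 : ∑ i, g i • (NM r p) i = ∑ k ∈ Finset.range m, (NM r p) (ℓ k) := by
      rw [← Finset.sum_fiberwise (Finset.range m) ℓ (fun k => (NM r p) (ℓ k))]
      apply Finset.sum_congr rfl
      intro i _
      have : ∀ k ∈ (Finset.range m).filter (fun k => ℓ k = i),
          (NM r p) (ℓ k) = (NM r p) i := by
        intro k hk
        rw [(Finset.mem_filter.mp hk).2]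
      rw [Finset.sum_congr rfl this, Finset.sum_const, hg]
      rw [Nat.cast_smul_eq_nsmul]
    rw [h1]
    have h2 : ∑ k ∈ Finset.range m, (NM r p) (ℓ k) = A 0 - A m := by
      rw [Finset.sum_congr rfl (fun k _ => hrow k)]
      exact Finset.sum_range_sub' A m
    rw [h2]
    have : A m = A 0 := by
      simp only [hA, hxm, Function.iterate_zero_apply]
      rfl
    rw [this, sub_self]
  have hnz : g (ℓ 0) ≠ 0 := by
    have h0 : (0 : ℕ) ∈ (Finset.range m).filter (fun k => ℓ k = ℓ 0) := by
      simp [Finset.mem_filter, Finset.mem_range, hm]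
    have : 0 < ((Finset.range m).filter (fun k => ℓ k = ℓ 0)).card :=
      Finset.card_pos.mpr ⟨0, h0⟩
    simp only [hg]
    exact_mod_cast this.ne'
  have hnli : ¬ LinearIndependent ℝ (fun i => (NM r p) i) := by
    rw [Fintype.not_linearIndependent_iff]
    exact ⟨g, hsum, ⟨ℓ 0, hnz⟩⟩
  exact (Matrix.detRowAlternating : _ [⋀^({x : V // x ≠ r})]→ₗ[ℝ] ℝ).map_linearDependent
    (NM r p) hnli

end Basic

section Decomp

variable {G : SimpleGraph V} {w : Sym2 V → ℝ} {r : V}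

lemma diag_sum (G : SimpleGraph V) (w : Sym2 V → ℝ) (a : V) :
    ∑ y ∈ Finset.univ.filter (G.Adj a ·), w s(a, y)
      = ∑ e ∈ G.edgeFinset.filter (fun e => a ∈ e), w e := by
  apply Finset.sum_bij (fun y _ => s(a, y))
  · intro y hy
    simp only [Finset.mem_filter, Finset.mem_univ, true_and] at hy
    simp [SimpleGraph.mem_edgeFinset, SimpleGraph.mem_edgeSet, hy]
  · intro y₁ h₁ y₂ h₂ heq
    exact Sym2.congr_right.mp heq
  · intro e he
    simp only [Finset.mem_filter, SimpleGraph.mem_edgeFinset] at he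
    obtain ⟨heE, haM⟩ := he
    refine ⟨Sym2.Mem.other' haM, ?_, (Sym2.other_spec' haM)⟩
    have : s(a, Sym2.Mem.other' haM) ∈ G.edgeSet := by rw [Sym2.other_spec' haM]; exact heE
    simp only [Finset.mem_filter, Finset.mem_univ, true_and]
    exact (SimpleGraph.mem_edgeSet G).mp this
  · intro y hy; rfl

lemma pair_filter {i j : {x : V // x ≠ r}} (hne : j ≠ i) :
    (incEdges G r i).filter (fun e => (j : V) ∈ e)
      = if G.Adj (i : V) (j : V) then {s((i : V), (j : V))} else ∅ := by
  have hcne : (j : V) ≠ (i : V) := fun h => hne (Subtype.ext h)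
  ext e
  simp only [incEdges, Finset.mem_filter, SimpleGraph.mem_edgeFinset]
  split_ifs with hadj
  · simp only [Finset.mem_singleton]
    constructor
    · rintro ⟨⟨heE, hiM⟩, hjM⟩
      obtain ⟨o, ho⟩ : ∃ o, e = s((i:V), o) := ⟨Sym2.Mem.other' hiM, (Sym2.other_spec' hiM).symm⟩
      subst ho
      rw [Sym2.mem_iff] at hjM
      rcases hjM with h | h
      · exact absurd h hcne
      · rw [h]
    · rintro rfl
      exact ⟨⟨(SimpleGraph.mem_edgeSet G).mpr hadj, Sym2.mem_mk_left _ _⟩, Sym2.mem_mk_right _ _⟩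
  · simp only [Finset.notMem_empty, iff_false]
    rintro ⟨⟨heE, hiM⟩, hjM⟩
    obtain ⟨o, ho⟩ : ∃ o, e = s((i:V), o) := ⟨Sym2.Mem.other' hiM, (Sym2.other_spec' hiM).symm⟩
    subst ho
    rw [Sym2.mem_iff] at hjM
    rcases hjM with h | h
    · exact hcne h
    · apply hadj
      rw [← h] at heE
      exact (SimpleGraph.mem_edgeSet G).mp heE

lemma row_decomp (G : SimpleGraph V) (w : Sym2 V → ℝ) (r : V) (i j : {x : V // x ≠ r}) :
    del r (lap G w) i j = ∑ e ∈ incEdges G r i, w e * rowV r i e j := by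
  have hLij : del r (lap G w) i j = lap G w (i : V) (j : V) := rfl
  by_cases h : j = i
  · subst h
    rw [hLij, lap, if_pos rfl]
    rw [diag_sum G w (j : V)]
    apply Finset.sum_congr rfl
    intro e _
    have : rowV r j e j = 1 := by simp [rowV]
    rw [this, mul_one]
  · have hcne : (i : V) ≠ (j : V) := fun hc => h (Subtype.ext hc.symm)
    rw [hLij, lap, if_neg hcne]
    have hrv : ∀ e, w e * rowV r i e j
        = -(w e * (if ((j : V) ∈ e) then 1 else 0)) := by
      intro e
      simp only [rowV, if_neg h]
      by_cases hm : (j : V) ∈ e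
      · rw [if_pos ⟨hm, h⟩, if_pos hm]; ring
      · rw [if_neg (fun hc => hm hc.1), if_neg hm]; ring
    rw [Finset.sum_congr rfl (fun e _ => hrv e), Finset.sum_neg_distrib]
    have : ∑ e ∈ incEdges G r i, w e * (if ((j : V) ∈ e) then 1 else 0)
        = ∑ e ∈ (incEdges G r i).filter (fun e => (j : V) ∈ e), w e := by
      rw [Finset.sum_filter]
      apply Finset.sum_congr rfl
      intro e _
      split_ifs <;> ring
    rw [this, pair_filter h]
    split_ifs with hadj
    · rw [Finset.sum_singleton]
    · rw [Finset.sum_empty, neg_zero]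

lemma det_expand (G : SimpleGraph V) (w : Sym2 V → ℝ) (r : V) :
    (del r (lap G w)).det = ∑ p ∈ Fintype.piFinset (incEdges G r),
      (∏ i, w (p i)) * (NM r p).det := by
  have h1 : del r (lap G w)
      = Matrix.of (fun i => ∑ e ∈ incEdges G r i, w e • rowV r i e) := by
    ext i j
    rw [row_decomp G w r i j]
    simp [Finset.sum_apply]
  have h2 : (del r (lap G w)).det
      = Matrix.detRowAlternating (Matrix.of (fun i => ∑ e ∈ incEdges G r i, w e • rowV r i e)) := by
    rw [h1]
    rfl
  rw [h2]
  have h3 : Matrix.detRowAlternating (Matrix.of (fun i => ∑ e ∈ incEdges G r i, w e • rowV r i e))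
      = ∑ p ∈ Fintype.piFinset (incEdges G r),
          (Matrix.detRowAlternating : _ [⋀^({x : V // x ≠ r})]→ₗ[ℝ] ℝ).toMultilinearMap
            (fun i => w (p i) • rowV r i (p i)) := by
    exact (Matrix.detRowAlternating :
      _ [⋀^({x : V // x ≠ r})]→ₗ[ℝ] ℝ).toMultilinearMap.map_sum_finset
        (g := fun i e => w e • rowV r i e) (A := incEdges G r)
  rw [h3]
  apply Finset.sum_congr rfl
  intro p _
  rw [MultilinearMap.map_smul_univ]
  rw [smul_eq_mul]
  rfl


end Decomp

section Graphs

variable {G : SimpleGraph V} {w : Sym2 V → ℝ} {r : V} {p : {x : V // x ≠ r} → Sym2 V}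

lemma p_eq_fstep (hp : ∀ i, p i ∈ incEdges G r i) (i : {x : V // x ≠ r}) :
    p i = s((i : V), fstep r p (i : V)) := by
  have hM := (Finset.mem_filter.mp (hp i)).2
  rw [fstep_of_ne i.2, Subtype.coe_eta]
  exact p_eq_nxt hM

lemma PhiT_adj {a b : V} :
    (PhiT r p).Adj a b ↔ (∃ i, p i = s(a, b)) ∧ a ≠ b := by
  rw [PhiT, SimpleGraph.fromEdgeSet_adj]
  simp only [Finset.mem_coe, Finset.mem_image, Finset.mem_univ, true_and]

lemma PhiT_adj_fstep (hp : ∀ i, p i ∈ incEdges G r i) (i : {x : V // x ≠ r}) :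
    (PhiT r p).Adj (i : V) (fstep r p (i : V)) := by
  rw [PhiT_adj]
  refine ⟨⟨i, (p_eq_fstep hp i)⟩, ?_⟩
  have hE := (Finset.mem_filter.mp (hp i)).1
  have hM := (Finset.mem_filter.mp (hp i)).2
  have := nxt_ne hE hM
  rw [fstep_of_ne i.2, Subtype.coe_eta]
  exact this.symm

lemma exists_path (hp : ∀ i, p i ∈ incEdges G r i) (hg : Good r p) (x : V) :
    ∃ W : (PhiT r p).Walk x r, W.IsPath ∧ (∀ y ∈ W.support, ht hg y ≤ ht hg x) ∧
      (x ≠ r → W.getVert 1 = fstep r p x) := by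
  generalize hn : ht hg x = n
  induction n using Nat.strong_induction_on generalizing x with
  | _ n ih =>
  by_cases hxr : x = r
  · subst hxr
    refine ⟨SimpleGraph.Walk.nil, SimpleGraph.Walk.IsPath.nil, ?_, fun h => absurd rfl h⟩
    intro y hy
    simp only [SimpleGraph.Walk.support_nil, List.mem_singleton] at hy
    subst hy
    exact hn.le
  · have hlt : ht hg (fstep r p x) < n := hn ▸ ht_fstep_lt hg hxr
    obtain ⟨W', hW'path, hW'supp, -⟩ := ih _ hlt (fstep r p x) rfl
    have hadj : (PhiT r p).Adj x (fstep r p x) := PhiT_adj_fstep hp ⟨x, hxr⟩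
    refine ⟨SimpleGraph.Walk.cons hadj W', ?_, ?_, ?_⟩
    · rw [SimpleGraph.Walk.cons_isPath_iff]
      refine ⟨hW'path, fun hx => ?_⟩
      have h1 := hW'supp x hx
      have h2 := ht_fstep_lt hg hxr
      omega
    · intro y hy
      rw [SimpleGraph.Walk.support_cons, List.mem_cons] at hy
      rcases hy with rfl | hy
      · exact hn.le
      · have h1 := hW'supp y hy
        have h2 := ht_fstep_lt hg hxr
        omega
    · intro _
      rw [show (1:ℕ) = 0 + 1 from rfl, SimpleGraph.Walk.getVert_cons_succ,
        SimpleGraph.Walk.getVert_zero]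

lemma PhiT_connected (hp : ∀ i, p i ∈ incEdges G r i) (hg : Good r p) :
    (PhiT r p).Connected := by
  rw [SimpleGraph.connected_iff]
  constructor
  · intro a b
    obtain ⟨Wa, -, -, -⟩ := exists_path hp hg a
    obtain ⟨Wb, -, -, -⟩ := exists_path hp hg b
    exact Wa.reachable.trans Wb.reachable.symm
  · exact ⟨r⟩

lemma cycle_two {H : SimpleGraph V} {x : V} (c : H.Walk x x) (hc : c.IsCycle) :
    ∃ y z, y ≠ z ∧ H.Adj x y ∧ H.Adj x z ∧ y ∈ c.support ∧ z ∈ c.support := by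
  cases c with
  | nil => exact absurd rfl hc.ne_nil
  | @cons _ y _ hadj q =>
    have hxy : x ≠ y := hadj.ne
    obtain ⟨z, hxz, q₂, hq2⟩ := SimpleGraph.Walk.exists_eq_cons_of_ne hxy q.reverse
    refine ⟨y, z, ?_, hadj, hxz, ?_, ?_⟩
    · intro h
      have hnd := hc.isCircuit.isTrail.edges_nodup
      rw [SimpleGraph.Walk.edges_cons] at hnd
      have hnotin : s(x, y) ∉ q.edges := (List.nodup_cons.mp hnd).1
      have hin : s(x, z) ∈ q.edges := by
        have h1 : s(x, z) ∈ q.reverse.edges := by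
          rw [hq2, SimpleGraph.Walk.edges_cons]
          exact List.mem_cons_self
        rw [SimpleGraph.Walk.edges_reverse] at h1
        exact List.mem_reverse.mp h1
      rw [← h] at hin
      exact hnotin hin
    · rw [SimpleGraph.Walk.support_cons]
      exact List.mem_cons_of_mem _ q.start_mem_support
    · rw [SimpleGraph.Walk.support_cons]
      apply List.mem_cons_of_mem
      have h1 : z ∈ q.reverse.support := by
        rw [hq2, SimpleGraph.Walk.support_cons]
        exact List.mem_cons_of_mem _ q₂.start_mem_support
      rw [SimpleGraph.Walk.support_reverse] at h1
      exact List.mem_reverse.mp h1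

lemma PhiT_isAcyclic (hp : ∀ i, p i ∈ incEdges G r i) (hg : Good r p) :
    (PhiT r p).IsAcyclic := by
  intro xv c hc
  have hTne : xv ∈ c.support.toFinset := List.mem_toFinset.mpr c.start_mem_support
  obtain ⟨x, hxT, hmax⟩ :=
    Finset.exists_max_image c.support.toFinset (fun y => ht hg y) ⟨xv, hTne⟩
  rw [List.mem_toFinset] at hxT
  have hmax' : ∀ y ∈ c.support, ht hg y ≤ ht hg x :=
    fun y hy => hmax y (List.mem_toFinset.mpr hy)
  have hc' : (c.rotate x hxT).IsCycle := hc.rotate hxT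
  have hsub : ∀ y ∈ (c.rotate x hxT).support, y ∈ c.support := by
    intro y hy
    have hperm := SimpleGraph.Walk.support_rotate c x hxT
    rw [SimpleGraph.Walk.support_eq_cons (c.rotate x hxT), List.mem_cons] at hy
    rcases hy with rfl | hy
    · exact hxT
    · exact List.mem_of_mem_tail (hperm.perm.subset hy)
  obtain ⟨y, z, hyz, hxy, hxz, hys, hzs⟩ := cycle_two (c.rotate x hxT) hc'
  by_cases hxr : x = r
  · have hler : ht hg y ≤ ht hg x := hmax' y (hsub y hys)
    have hr0 : ht hg x = 0 := (ht_eq_zero_iff hg x).mpr hxr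
    have hy0 : y = r := (ht_eq_zero_iff hg y).mp (by omega)
    exact hxy.ne (by rw [hxr, hy0])
  · have key : ∀ u, (PhiT r p).Adj x u → u ∈ c.support → u = fstep r p x := by
      intro u hadj hus
      obtain ⟨⟨i, hpi⟩, hne⟩ := PhiT_adj.mp hadj
      rw [p_eq_fstep hp i, Sym2.eq_iff] at hpi
      rcases hpi with ⟨h1, h2⟩ | ⟨h1, h2⟩
      · rw [← h2, h1]
      · exfalso
        have hlt : ht hg x < ht hg (i : V) := h2 ▸ ht_fstep_lt hg i.2
        have hle : ht hg (i : V) ≤ ht hg x := hmax' _ (h1 ▸ hus)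
        omega
    have hy' := key y hxy (hsub y hys)
    have hz' := key z hxz (hsub z hzs)
    exact hyz (hy'.trans hz'.symm)

lemma PhiT_le (hp : ∀ i, p i ∈ incEdges G r i) : PhiT r p ≤ G := by
  intro a b hab
  obtain ⟨⟨i, hpi⟩, hne⟩ := PhiT_adj.mp hab
  have hE := (Finset.mem_filter.mp (hp i)).1
  rw [hpi] at hE
  exact (SimpleGraph.mem_edgeSet G).mp (SimpleGraph.mem_edgeFinset.mp hE)

lemma PhiT_mem (hp : ∀ i, p i ∈ incEdges G r i) (hg : Good r p) :
    PhiT r p ∈ spanningTrees G := by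
  rw [spanningTrees, Finset.mem_filter]
  exact ⟨Finset.mem_univ _, PhiT_le hp,
    ⟨PhiT_connected hp hg, PhiT_isAcyclic hp hg⟩⟩

lemma p_injective (hp : ∀ i, p i ∈ incEdges G r i) (hg : Good r p) :
    Function.Injective p := by
  intro i j hij
  by_contra hne
  have hEi := (Finset.mem_filter.mp (hp i)).1
  have hMi := (Finset.mem_filter.mp (hp i)).2
  have hEj := (Finset.mem_filter.mp (hp j)).1
  have hMj := (Finset.mem_filter.mp (hp j)).2
  have hjM : (j : V) ∈ p i := by rw [hij]; exact hMj
  have hiM : (i : V) ∈ p j := by rw [← hij]; exact hMi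
  have h1 : (j : V) = nxt r p i := (mem_p_iff hEi hMi j).mp ⟨hjM, fun h => hne h.symm⟩
  have h2 : (i : V) = nxt r p j := (mem_p_iff hEj hMj i).mp ⟨hiM, fun h => hne h⟩
  have hlt1 : ht hg (j : V) < ht hg (i : V) := h1 ▸ ht_nxt_lt hg i
  have hlt2 : ht hg (i : V) < ht hg (j : V) := h2 ▸ ht_nxt_lt hg j
  omega

lemma tw_PhiT (hp : ∀ i, p i ∈ incEdges G r i) (hg : Good r p) :
    tw w (PhiT r p) = ∏ i, w (p i) := by
  have hedge : (PhiT r p).edgeSet = ↑(Finset.image p Finset.univ) := by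
    rw [PhiT, SimpleGraph.edgeSet_fromEdgeSet]
    ext e
    simp only [Set.mem_diff, Finset.mem_coe, Finset.mem_image, Finset.mem_univ, true_and,
      Set.mem_setOf_eq]
    constructor
    · rintro ⟨h, -⟩; exact h
    · rintro ⟨i, rfl⟩
      refine ⟨⟨i, rfl⟩, ?_⟩
      have hE := (Finset.mem_filter.mp (hp i)).1
      exact G.not_isDiag_of_mem_edgeSet (SimpleGraph.mem_edgeFinset.mp hE)
  have hfin : (PhiT r p).edgeSet.toFinset = Finset.image p Finset.univ := by
    apply Finset.ext
    intro e
    rw [Set.mem_toFinset, hedge, Finset.mem_coe]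
  rw [tw, hfin]
  rw [Finset.prod_image (fun i _ j _ h => p_injective hp hg h)]

lemma PhiT_injective {p' : {x : V // x ≠ r} → Sym2 V}
    (hp : ∀ i, p i ∈ incEdges G r i) (hg : Good r p)
    (hp' : ∀ i, p' i ∈ incEdges G r i) (hg' : Good r p')
    (h : PhiT r p = PhiT r p') : p = p' := by
  funext i
  obtain ⟨W, hWp, -, hWg⟩ := exists_path hp hg (i : V)
  have hW'2 : ∃ W2 : (PhiT r p).Walk (i : V) r, W2.IsPath ∧
      ((i : V) ≠ r → W2.getVert 1 = fstep r p' (i : V)) := by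
    rw [h]
    obtain ⟨W', hW'p, -, hW'g⟩ := exists_path hp' hg' (i : V)
    exact ⟨W', hW'p, hW'g⟩
  obtain ⟨W2, hW2p, hW2g⟩ := hW'2
  have htree : (PhiT r p).IsTree := ⟨PhiT_connected hp hg, PhiT_isAcyclic hp hg⟩
  have huniq := htree.existsUnique_path (i : V) r
  have hWW : W = W2 := huniq.unique hWp hW2p
  have heq : fstep r p (i : V) = fstep r p' (i : V) := by
    rw [← hWg i.2, hWW, hW2g i.2]
  rw [p_eq_fstep hp i, p_eq_fstep hp' i, heq]

lemma exists_preimage {H : SimpleGraph V} (hH : H ∈ spanningTrees G) :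
    ∃ p : {x : V // x ≠ r} → Sym2 V,
      (∀ i, p i ∈ incEdges G r i) ∧ Good r p ∧ PhiT r p = H := by
  rw [spanningTrees, Finset.mem_filter] at hH
  obtain ⟨-, hle, htree⟩ := hH
  have huniq := htree.existsUnique_path
  set P : ∀ x : V, H.Walk x r := fun x => (huniq x r).choose with hPdef
  have hPpath : ∀ x, (P x).IsPath := fun x => (huniq x r).choose_spec.1
  have hPuniq : ∀ x (q : H.Walk x r), q.IsPath → q = P x :=
    fun x q hq => (huniq x r).choose_spec.2 q hq
  set nv : V → V := fun x => (P x).getVert 1 with hnvdef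
  have hstep : ∀ x, x ≠ r → H.Adj x (nv x) ∧ (P x).length = (P (nv x)).length + 1 := by
    intro x hx
    obtain ⟨y, hadj, q, hq⟩ := SimpleGraph.Walk.exists_eq_cons_of_ne hx (P x)
    have hnvx : nv x = y := by
      rw [hnvdef]
      show (P x).getVert 1 = y
      rw [hq, show (1:ℕ) = 0 + 1 from rfl, SimpleGraph.Walk.getVert_cons_succ,
        SimpleGraph.Walk.getVert_zero]
    have hqpath : q.IsPath := by
      have hx2 := hPpath x
      rw [hq] at hx2
      exact hx2.of_cons
    have hqP : q = P y := hPuniq y q hqpath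
    refine ⟨by rw [hnvx]; exact hadj, ?_⟩
    rw [hq, SimpleGraph.Walk.length_cons, hnvx, ← hqP]
  set p : {x : V // x ≠ r} → Sym2 V := fun i => s((i : V), nv (i : V)) with hpdef
  have hpmem : ∀ i, p i ∈ incEdges G r i := by
    intro i
    rw [incEdges, Finset.mem_filter, SimpleGraph.mem_edgeFinset, SimpleGraph.mem_edgeSet]
    exact ⟨hle (hstep (i : V) i.2).1, Sym2.mem_mk_left _ _⟩
  have hfstep : ∀ x (hx : x ≠ r), fstep r p x = nv x := by
    intro x hx
    rw [fstep_of_ne hx]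
    have hM : (x : V) ∈ p ⟨x, hx⟩ := Sym2.mem_mk_left _ _
    have hpe := p_eq_nxt (p := p) (i := ⟨x, hx⟩) hM
    have : s(x, nv x) = s(x, nxt r p ⟨x, hx⟩) := hpe
    exact (Sym2.congr_right.mp this).symm
  have hGood : Good r p := by
    intro x
    generalize hn : (P x).length = n
    induction n using Nat.strong_induction_on generalizing x with
    | _ n ih =>
    by_cases hxr : x = r
    · exact ⟨0, by simp [hxr]⟩
    · obtain ⟨hadj, hlen⟩ := hstep x hxr
      have hlt : (P (nv x)).length < n := by omega
      obtain ⟨n', hn'⟩ := ih _ hlt (nv x) rfl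
      exact ⟨n' + 1, by rw [Function.iterate_succ_apply, hfstep x hxr, hn']⟩
  have hpinj : Function.Injective p := by
    intro i j hij
    by_contra hne
    rw [hpdef] at hij
    have hij2 : s((i : V), nv (i : V)) = s((j : V), nv (j : V)) := hij
    rw [Sym2.eq_iff] at hij2
    rcases hij2 with ⟨h1, h2⟩ | ⟨h1, h2⟩
    · exact hne (Subtype.ext h1)
    · have l1 := (hstep (i : V) i.2).2
      have l2 := (hstep (j : V) j.2).2
      rw [h2] at l1
      rw [← h1] at l2
      omega
  have himg : Finset.image p Finset.univ = H.edgeFinset := by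
    apply Finset.eq_of_subset_of_card_le
    · intro e he
      rw [Finset.mem_image] at he
      obtain ⟨i, -, rfl⟩ := he
      rw [SimpleGraph.mem_edgeFinset]
      exact (hstep (i : V) i.2).1
    · rw [Finset.card_image_of_injective _ hpinj, Finset.card_univ]
      have hcv : Fintype.card {x : V // x ≠ r} = Fintype.card V - 1 := by
        have h1 : Fintype.card {x : V // ¬ x = r} = Fintype.card V - Fintype.card {x : V // x = r} :=
          Fintype.card_subtype_compl _
        rw [Fintype.card_subtype_eq] at h1
        exact h1
      have hce := htree.card_edgeFinset
      omega
  refine ⟨p, hpmem, hGood, ?_⟩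
  rw [PhiT, himg, SimpleGraph.coe_edgeFinset, SimpleGraph.fromEdgeSet_edgeSet]

end Graphs

section MT

variable {G : SimpleGraph V} {w : Sym2 V → ℝ} {r : V}

theorem det_del_lap (G : SimpleGraph V) (w : Sym2 V → ℝ) (r : V) :
    (del r (lap G w)).det = Z G w := by
  classical
  rw [det_expand G w r]
  rw [← Finset.sum_filter_add_sum_filter_not (Fintype.piFinset (incEdges G r)) (Good r)]
  have hbad : ∑ p ∈ (Fintype.piFinset (incEdges G r)).filter (fun p => ¬ Good r p),
      (∏ i, w (p i)) * (NM r p).det = 0 := by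
    apply Finset.sum_eq_zero
    intro p hp
    rw [Finset.mem_filter] at hp
    have hmem : ∀ i, p i ∈ incEdges G r i := Fintype.mem_piFinset.mp hp.1
    rw [det_NM_bad hmem hp.2, mul_zero]
  rw [hbad, add_zero]
  have hgood : ∑ p ∈ (Fintype.piFinset (incEdges G r)).filter (Good r),
      (∏ i, w (p i)) * (NM r p).det
      = ∑ p ∈ (Fintype.piFinset (incEdges G r)).filter (Good r), ∏ i, w (p i) := by
    apply Finset.sum_congr rfl
    intro p hp
    rw [Finset.mem_filter] at hp
    have hmem : ∀ i, p i ∈ incEdges G r i := Fintype.mem_piFinset.mp hp.1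
    rw [det_NM_good hmem hp.2, mul_one]
  rw [hgood, Z]
  apply Finset.sum_bij (fun p _ => PhiT r p)
  · intro p hp
    rw [Finset.mem_filter] at hp
    exact PhiT_mem (Fintype.mem_piFinset.mp hp.1) hp.2
  · intro p hp q hq heq
    rw [Finset.mem_filter] at hp hq
    exact PhiT_injective (Fintype.mem_piFinset.mp hp.1) hp.2
      (Fintype.mem_piFinset.mp hq.1) hq.2 heq
  · intro H hH
    obtain ⟨p, hpmem, hgoodp, hPhi⟩ := exists_preimage (r := r) hH
    refine ⟨p, ?_, hPhi⟩
    rw [Finset.mem_filter]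
    exact ⟨Fintype.mem_piFinset.mpr hpmem, hgoodp⟩
  · intro p hp
    rw [Finset.mem_filter] at hp
    exact (tw_PhiT (Fintype.mem_piFinset.mp hp.1) hp.2).symm

theorem Z_pos (hG : G.Connected) (hw : ∀ e ∈ G.edgeSet, 0 < w e) (r : V) :
    0 < Z G w := by
  classical
  have hne : (spanningTrees G).Nonempty := by
    have hsel : ∀ i : {x : V // x ≠ r}, ∃ y, G.Adj (i : V) y ∧ G.dist y r < G.dist (i : V) r := by
      intro i
      obtain ⟨W, hlen⟩ := hG.exists_walk_length_eq_dist (i : V) r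
      have hd0 : G.dist (i : V) r ≠ 0 := by
        intro h
        exact i.2 ((hG.preconnected (i : V) r).dist_eq_zero_iff.mp h)
      obtain ⟨y, hadj, q, hq⟩ := SimpleGraph.Walk.exists_eq_cons_of_ne i.2 W
      refine ⟨y, hadj, ?_⟩
      have h1 : G.dist y r ≤ q.length := SimpleGraph.dist_le q
      have h2 : W.length = q.length + 1 := by rw [hq, SimpleGraph.Walk.length_cons]
      omega
    choose nv hadj hlt using hsel
    set p : {x : V // x ≠ r} → Sym2 V := fun i => s((i : V), nv i) with hpdef
    have hpmem : ∀ i, p i ∈ incEdges G r i := by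
      intro i
      rw [incEdges, Finset.mem_filter, SimpleGraph.mem_edgeFinset, SimpleGraph.mem_edgeSet]
      exact ⟨hadj i, Sym2.mem_mk_left _ _⟩
    have hfstep : ∀ x (hx : x ≠ r), fstep r p x = nv ⟨x, hx⟩ := by
      intro x hx
      rw [fstep_of_ne hx]
      have hM : (x : V) ∈ p ⟨x, hx⟩ := Sym2.mem_mk_left _ _
      have hpe : s(x, nv ⟨x, hx⟩) = s(x, nxt r p ⟨x, hx⟩) := p_eq_nxt hM
      exact (Sym2.congr_right.mp hpe).symm
    have hGood : Good r p := by
      intro x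
      generalize hn : G.dist x r = n
      induction n using Nat.strong_induction_on generalizing x with
      | _ n ih =>
      by_cases hxr : x = r
      · exact ⟨0, by simp [hxr]⟩
      · have hlt' : G.dist (nv ⟨x, hxr⟩) r < n := hn ▸ hlt ⟨x, hxr⟩
        obtain ⟨n', hn'⟩ := ih _ hlt' _ rfl
        exact ⟨n' + 1, by rw [Function.iterate_succ_apply, hfstep x hxr, hn']⟩
    exact ⟨PhiT r p, PhiT_mem hpmem hGood⟩
  rw [Z]
  apply Finset.sum_pos ?_ hne
  intro H hH
  rw [spanningTrees, Finset.mem_filter] at hH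
  rw [tw]
  apply Finset.prod_pos
  intro e he
  rw [Set.mem_toFinset] at he
  exact hw e (SimpleGraph.edgeSet_mono hH.2.1 he)

theorem spanningTrees_delete {u v : V} (huv : G.Adj u v) :
    spanningTrees (G.deleteEdges {s(u, v)})
      = (spanningTrees G).filter (fun H => ¬ H.Adj u v) := by
  classical
  ext H
  simp only [spanningTrees, Finset.mem_filter, Finset.mem_univ, true_and]
  constructor
  · rintro ⟨hle, htree⟩
    refine ⟨⟨le_trans hle (SimpleGraph.deleteEdges_le _), htree⟩, ?_⟩
    intro hadj
    have h2 := hle hadj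
    rw [SimpleGraph.deleteEdges_adj] at h2
    exact h2.2 rfl
  · rintro ⟨⟨hle, htree⟩, hnadj⟩
    refine ⟨?_, htree⟩
    intro a b hab
    rw [SimpleGraph.deleteEdges_adj]
    refine ⟨hle hab, ?_⟩
    intro hmem
    rw [Set.mem_singleton_iff, Sym2.eq_iff] at hmem
    rcases hmem with ⟨rfl, rfl⟩ | ⟨rfl, rfl⟩
    · exact hnadj hab
    · exact hnadj hab.symm

end MT

section Delete

variable {G : SimpleGraph V} {w : Sym2 V → ℝ} {r : V}

lemma lap_deleteEdge (G : SimpleGraph V) (w : Sym2 V → ℝ) {u v : V} (huv : G.Adj u v)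
    (a b : V) :
    lap (G.deleteEdges {s(u, v)}) w a b
      = lap G w a b - w s(u, v) * ((if a = u then (1:ℝ) else 0) - (if a = v then 1 else 0))
          * ((if b = u then (1:ℝ) else 0) - (if b = v then 1 else 0)) := by
  classical
  have hne : u ≠ v := huv.ne
  by_cases hab : a = b
  · subst hab
    simp only [lap, if_true]
    have hfe : Finset.univ.filter ((G.deleteEdges {s(u,v)}).Adj a ·)
        = (Finset.univ.filter (G.Adj a ·)).filter (fun y => ¬ s(a, y) = s(u, v)) := by
      ext y
      simp only [Finset.mem_filter, Finset.mem_univ, true_and, SimpleGraph.deleteEdges_adj,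
        Set.mem_singleton_iff]
    rw [Finset.filter_congr_decidable, hfe]
    have hsplit := Finset.sum_filter_add_sum_filter_not (Finset.univ.filter (G.Adj a ·))
      (fun y => s(a, y) = s(u, v)) (fun y => w s(a, y))
    have hqval : ∑ y ∈ (Finset.univ.filter (G.Adj a ·)).filter (fun y => s(a, y) = s(u, v)),
        w s(a, y)
        = w s(u,v) * ((if a = u then (1:ℝ) else 0) - (if a = v then 1 else 0))
          * ((if a = u then (1:ℝ) else 0) - (if a = v then 1 else 0)) := by
      by_cases hau : a = u
      · have hset : (Finset.univ.filter (G.Adj a ·)).filter (fun y => s(a, y) = s(u, v)) = {v} := by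
          ext y
          simp only [Finset.mem_filter, Finset.mem_univ, true_and, Finset.mem_singleton]
          constructor
          · rintro ⟨hadj, heq⟩
            rw [hau] at heq
            exact Sym2.congr_right.mp heq
          · rintro rfl
            exact ⟨by rw [hau]; exact huv, by rw [hau]⟩
        rw [hset, Finset.sum_singleton]
        have hw1 : w s(a, v) = w s(u, v) := by rw [hau]
        have hav : a ≠ v := by rw [hau]; exact hne
        rw [hw1, if_pos hau, if_neg hav]
        ring
      · by_cases hav : a = v
        · have hset : (Finset.univ.filter (G.Adj a ·)).filter (fun y => s(a, y) = s(u, v)) = {u} := by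
            ext y
            simp only [Finset.mem_filter, Finset.mem_univ, true_and, Finset.mem_singleton]
            constructor
            · rintro ⟨hadj, heq⟩
              rw [hav] at heq
              rw [show s(u, v) = s(v, u) from Sym2.eq_swap] at heq
              exact Sym2.congr_right.mp heq
            · rintro rfl
              refine ⟨by rw [hav]; exact huv.symm, ?_⟩
              rw [hav, Sym2.eq_swap]
          rw [hset, Finset.sum_singleton]
          have hw1 : w s(a, u) = w s(u, v) := by rw [hav, Sym2.eq_swap]
          rw [hw1, if_neg hau, if_pos hav]
          ring
        · have hset : (Finset.univ.filter (G.Adj a ·)).filter (fun y => s(a, y) = s(u, v)) = ∅ := by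
            ext y
            simp only [Finset.mem_filter, Finset.mem_univ, true_and, Finset.notMem_empty,
              iff_false, not_and]
            intro hadj heq
            rw [Sym2.eq_iff] at heq
            rcases heq with ⟨h1, -⟩ | ⟨h1, -⟩
            · exact hau h1
            · exact hav h1
          rw [hset, Finset.sum_empty, if_neg hau, if_neg hav]
          ring
    linarith [hsplit, hqval]
  · simp only [lap, if_neg hab]
    by_cases he : s(a, b) = s(u, v)
    · have hG'na : ¬ (G.deleteEdges {s(u,v)}).Adj a b := by
        rw [SimpleGraph.deleteEdges_adj]
        rintro ⟨-, hmem⟩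
        exact hmem he
      rw [if_neg hG'na]
      rw [Sym2.eq_iff] at he
      rcases he with ⟨ha, hb⟩ | ⟨ha, hb⟩
      · have hadj : G.Adj a b := by rw [ha, hb]; exact huv
        rw [if_pos hadj]
        have hwab : w s(a, b) = w s(u, v) := by rw [ha, hb]
        rw [hwab, if_pos ha, if_neg (show a ≠ v by rw [ha]; exact hne),
          if_neg (show b ≠ u by rw [hb]; exact Ne.symm hne), if_pos hb]
        ring
      · have hadj : G.Adj a b := by rw [ha, hb]; exact huv.symm
        rw [if_pos hadj]
        have hwab : w s(a, b) = w s(u, v) := by rw [ha, hb, Sym2.eq_swap]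
        rw [hwab, if_neg (show a ≠ u by rw [ha]; exact Ne.symm hne), if_pos ha, if_pos hb,
          if_neg (show b ≠ v by rw [hb]; exact hne)]
        ring
    · have hadj_iff : (G.deleteEdges {s(u,v)}).Adj a b ↔ G.Adj a b := by
        rw [SimpleGraph.deleteEdges_adj]
        exact ⟨fun h => h.1, fun h => ⟨h, fun hm => he (Set.mem_singleton_iff.mp hm)⟩⟩
      have hchi : w s(u,v) * ((if a = u then (1:ℝ) else 0) - (if a = v then 1 else 0))
          * ((if b = u then (1:ℝ) else 0) - (if b = v then 1 else 0)) = 0 := by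
        by_cases hau : a = u
        · have hbv : b ≠ v := fun h => he (by rw [hau, h])
          have hbu : b ≠ u := fun h => hab (hau.trans h.symm)
          rw [if_neg hbu, if_neg hbv]
          ring
        · by_cases hav : a = v
          · have hbu : b ≠ u := fun h => he (by rw [hav, h, Sym2.eq_swap])
            have hbv : b ≠ v := fun h => hab (hav.trans h.symm)
            rw [if_neg hbu, if_neg hbv]
            ring
          · rw [if_neg hau, if_neg hav]
            ring
      rw [hchi, sub_zero]
      by_cases hGadj : G.Adj a b
      · rw [if_pos hGadj, if_pos (hadj_iff.mpr hGadj)]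
      · rw [if_neg hGadj, if_neg (fun h => hGadj (hadj_iff.mp h))]

def xind (r u v : V) : {x : V // x ≠ r} → ℝ :=
  fun j => (if (j : V) = u then (1:ℝ) else 0) - (if (j : V) = v then 1 else 0)

lemma del_lap_delete (G : SimpleGraph V) (w : Sym2 V → ℝ) {u v : V} (r : V)
    (huv : G.Adj u v) :
    del r (lap (G.deleteEdges {s(u, v)}) w)
      = del r (lap G w)
        + Matrix.replicateCol Unit (fun i => -(w s(u, v)) * xind r u v i)
            * Matrix.replicateRow Unit (xind r u v) := by
  ext i j
  have hcr : (Matrix.replicateCol Unit (fun i : {x : V // x ≠ r} => -(w s(u, v)) * xind r u v i)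
      * Matrix.replicateRow Unit (xind r u v)) i j = -(w s(u,v)) * xind r u v i * xind r u v j := by
    rw [Matrix.mul_apply]
    simp [Matrix.replicateCol_apply, Matrix.replicateRow_apply]
  rw [Matrix.add_apply, hcr]
  show lap (G.deleteEdges {s(u,v)}) w (i : V) (j : V) = lap G w (i : V) (j : V) + _
  rw [lap_deleteEdge G w huv (i : V) (j : V)]
  simp only [xind]
  ring

lemma lap_symm (G : SimpleGraph V) (w : Sym2 V → ℝ) (a b : V) :
    lap G w a b = lap G w b a := by
  by_cases hab : a = b
  · rw [hab]
  · simp only [lap, if_neg hab, if_neg (Ne.symm hab)]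
    by_cases hadj : G.Adj a b
    · rw [if_pos hadj, if_pos hadj.symm, show s(a, b) = s(b, a) from Sym2.eq_swap]
    · rw [if_neg hadj, if_neg (fun h => hadj h.symm)]

end Delete

lemma Ex_prob (G : SimpleGraph V) (w : Sym2 V → ℝ) (u v : V) :
    Ex G w (fun H => if H.Adj u v then 1 else 0)
      = (∑ H ∈ (spanningTrees G).filter (fun H => H.Adj u v), tw w H) / Z G w := by
  classical
  rw [Ex]
  have h1 : ∀ H ∈ spanningTrees G, tw w H / Z G w * (if H.Adj u v then (1:ℝ) else 0)
      = if H.Adj u v then tw w H / Z G w else 0 := by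
    intro H _
    split_ifs <;> ring
  rw [Finset.sum_congr rfl h1, ← Finset.sum_filter, Finset.sum_div]

end Stmt10Aux

/-- for `r ≠ u, v`, the probability that the edge `(u,v)` belongs to a
random spanning tree equals `w(ê)·(ℓ_{uu} + ℓ_{vv} - 2ℓ_{uv})` with `ℓ = (L_G^{[r]})⁻¹`. -/
theorem stmt10 (G : SimpleGraph V) (hG : G.Connected) (w : Sym2 V → ℝ)
    (hw : ∀ e ∈ G.edgeSet, 0 < w e) (u v r : V) (hadj : G.Adj u v)
    (hu : u ≠ r) (hv : v ≠ r) :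
    Ex G w (fun H => if H.Adj u v then 1 else 0) =
      w s(u, v) * ((del r (lap G w))⁻¹ ⟨u, hu⟩ ⟨u, hu⟩
        + (del r (lap G w))⁻¹ ⟨v, hv⟩ ⟨v, hv⟩
        - 2 * (del r (lap G w))⁻¹ ⟨u, hu⟩ ⟨v, hv⟩) := by
  classical
  have hne : u ≠ v := hadj.ne
  set q : ℝ := (del r (lap G w))⁻¹ ⟨u, hu⟩ ⟨u, hu⟩
        + (del r (lap G w))⁻¹ ⟨v, hv⟩ ⟨v, hv⟩
        - 2 * (del r (lap G w))⁻¹ ⟨u, hu⟩ ⟨v, hv⟩ with hqdef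
  have hZpos : 0 < Z G w := Stmt10Aux.Z_pos hG hw r
  have hdetL : (del r (lap G w)).det = Z G w := Stmt10Aux.det_del_lap G w r
  have hunit : IsUnit (del r (lap G w)).det := by
    rw [hdetL]
    exact isUnit_iff_ne_zero.mpr (ne_of_gt hZpos)
  set X := Stmt10Aux.xind r u v with hXdef
  set W := w s(u, v) with hWdef
  set Li := (del r (lap G w))⁻¹ with hLidef
  set uu : {x : V // x ≠ r} := ⟨u, hu⟩ with huu
  set vv : {x : V // x ≠ r} := ⟨v, hv⟩ with hvv
  have hsum1 : ∀ F : {x : V // x ≠ r} → ℝ, ∑ j, X j * F j = F uu - F vv := by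
    intro F
    have hterm : ∀ j : {x : V // x ≠ r}, X j * F j
        = (if j = uu then F j else 0) - (if j = vv then F j else 0) := by
      intro j
      have e1 : ((j : V) = u) ↔ (j = uu) :=
        ⟨fun h => Subtype.ext h, fun h => congrArg Subtype.val h⟩
      have e2 : ((j : V) = v) ↔ (j = vv) :=
        ⟨fun h => Subtype.ext h, fun h => congrArg Subtype.val h⟩
      rw [hXdef]
      simp only [Stmt10Aux.xind]
      rw [if_congr e1 rfl rfl, if_congr e2 rfl rfl]
      split_ifs <;> ring
    rw [Finset.sum_congr rfl (fun j _ => hterm j), Finset.sum_sub_distrib,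
      Finset.sum_ite_eq' Finset.univ uu F, Finset.sum_ite_eq' Finset.univ vv F,
      if_pos (Finset.mem_univ _), if_pos (Finset.mem_univ _)]
  have hsymm : Li vv uu = Li uu vv := by
    have hLt : Matrix.transpose (del r (lap G w)) = del r (lap G w) := by
      ext i j
      rw [Matrix.transpose_apply]
      exact Stmt10Aux.lap_symm G w (j : V) (i : V)
    calc Li vv uu = Matrix.transpose Li uu vv := by rw [Matrix.transpose_apply]
      _ = (Matrix.transpose (del r (lap G w)))⁻¹ uu vv := by
            rw [hLidef, Matrix.transpose_nonsing_inv]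
      _ = Li uu vv := by rw [hLt, hLidef]
  have hform : (1 + Matrix.replicateRow Unit X * (del r (lap G w))⁻¹
      * Matrix.replicateCol Unit (fun i => -W * X i)).det = 1 - W * q := by
    rw [Matrix.det_unique, Matrix.add_apply, Matrix.one_apply_eq, Matrix.mul_apply]
    have hrow : ∀ k, (Matrix.replicateRow Unit X * (del r (lap G w))⁻¹) default k
        = ∑ j, X j * Li j k := by
      intro k
      rw [Matrix.mul_apply]
      apply Finset.sum_congr rfl
      intro j _
      rw [Matrix.replicateRow_apply, hLidef]
    have h1 : ∀ k, (Matrix.replicateRow Unit X * (del r (lap G w))⁻¹) default k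
        * (Matrix.replicateCol Unit (fun i => -W * X i)) k default
        = -W * (X k * ∑ j, X j * Li j k) := by
      intro k
      rw [Matrix.replicateCol_apply, hrow]
      ring
    rw [Finset.sum_congr rfl (fun k _ => h1 k), ← Finset.mul_sum,
      hsum1 (fun k => ∑ j, X j * Li j k),
      hsum1 (fun j => Li j uu), hsum1 (fun j => Li j vv), hsymm, hqdef]
    ring
  have hZdel : Z (G.deleteEdges {s(u, v)}) w = Z G w * (1 - W * q) := by
    rw [← Stmt10Aux.det_del_lap (G.deleteEdges {s(u, v)}) w r]
    rw [Stmt10Aux.del_lap_delete G w r hadj]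
    rw [← hWdef, ← hXdef]
    rw [Matrix.det_add_replicateCol_mul_replicateRow hunit, hform, hdetL]
  have hsplitZ : Z G w = (∑ H ∈ (spanningTrees G).filter (fun H => H.Adj u v), tw w H)
      + Z (G.deleteEdges {s(u, v)}) w := by
    have h2 : Z (G.deleteEdges {s(u, v)}) w
        = ∑ H ∈ (spanningTrees G).filter (fun H => ¬ H.Adj u v), tw w H := by
      rw [Z, Stmt10Aux.spanningTrees_delete hadj]
    rw [h2, Z, ← Finset.sum_filter_add_sum_filter_not (spanningTrees G) (fun H => H.Adj u v)]
  rw [Stmt10Aux.Ex_prob]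
  have hS : (∑ H ∈ (spanningTrees G).filter (fun H => H.Adj u v), tw w H)
      = Z G w * (W * q) := by
    rw [hZdel] at hsplitZ
    linarith [hsplitZ]
  rw [hS, mul_comm (Z G w) (W * q), mul_div_assoc, div_self (ne_of_gt hZpos), mul_one]
end
end
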